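/- arXiv:2503.12238 — 8 statements merged into one kernel-verified Lean document; each statement's English description precedes it below -/
import Mathlib

section
/- Let S be a nonempty finite type, let Q, P : Matrix S S ℝ be substochastic with Q ≤ P entrywise, and let α be a real number with 0 < α < 1. Then (1 - α • Q)⁻¹ ≤ (1 - α • P)⁻¹ entrywise. -/
open Matrix BigOperators

/-- A matrix is substochastic if every entry is nonnegative and every row sum is at most 1. -/
def Substochastic {S : Type*} [Fintype S] (P : Matrix S S ℝ) : Prop :=
  (∀ s s', 0 ≤ P s s') ∧ ∀ s, ∑ s', P s s' ≤ 1

open Finset Filter Topology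

section Aux

set_option linter.unusedSectionVars false

variable {S : Type*} [Fintype S] [Nonempty S] [DecidableEq S]

lemma substochastic_mul {A B : Matrix S S ℝ} (hA : Substochastic A) (hB : Substochastic B) :
    Substochastic (A * B) := by
  constructor
  · intro s s'
    rw [Matrix.mul_apply]
    exact Finset.sum_nonneg fun j _ => mul_nonneg (hA.1 s j) (hB.1 j s')
  · intro s
    simp only [Matrix.mul_apply]
    rw [Finset.sum_comm]
    calc ∑ j, ∑ s', A s j * B j s' = ∑ j, A s j * ∑ s', B j s' := by
          simp [Finset.mul_sum]
      _ ≤ ∑ j, A s j * 1 := by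
          refine Finset.sum_le_sum fun j _ => ?_
          exact mul_le_mul_of_nonneg_left (hB.2 j) (hA.1 s j)
      _ = ∑ j, A s j := by simp
      _ ≤ 1 := hA.2 s

lemma substochastic_one : Substochastic (1 : Matrix S S ℝ) := by
  constructor
  · intro s s'
    by_cases h : s = s' <;> simp [Matrix.one_apply, h]
  · intro s
    simp [Matrix.one_apply]

lemma substochastic_pow {P : Matrix S S ℝ} (hP : Substochastic P) (n : ℕ) :
    Substochastic (P ^ n) := by
  induction n with
  | zero => simpa using substochastic_one
  | succ n ih => rw [pow_succ]; exact substochastic_mul ih hP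

lemma substochastic_entry_le_one {P : Matrix S S ℝ} (hP : Substochastic P) (s s' : S) :
    P s s' ≤ 1 := by
  calc P s s' ≤ ∑ j, P s j := Finset.single_le_sum (fun j _ => hP.1 s j) (Finset.mem_univ s')
    _ ≤ 1 := hP.2 s

lemma isUnit_det_one_sub_smul {P : Matrix S S ℝ} (hP : Substochastic P) {α : ℝ}
    (hα0 : 0 < α) (hα1 : α < 1) : IsUnit (1 - α • P).det := by
  rw [isUnit_iff_ne_zero]
  intro hdet
  obtain ⟨v, hv, hv0⟩ := (Matrix.exists_mulVec_eq_zero_iff).2 hdet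
  have hkey : ∀ i, v i = α * ∑ j, P i j * v j := by
    intro i
    have h0 : ((1 - α • P) *ᵥ v) i = 0 := by rw [hv0]; rfl
    rw [Matrix.sub_mulVec, Matrix.one_mulVec, Matrix.smul_mulVec] at h0
    simp only [Pi.sub_apply, Pi.smul_apply, smul_eq_mul, Matrix.mulVec,
      dotProduct] at h0
    linarith
  -- pick index with maximal |v i|
  obtain ⟨i, -, hi⟩ := Finset.exists_max_image (Finset.univ : Finset S) (fun j => |v j|)
    (Finset.univ_nonempty)
  have hbound : |v i| ≤ α * |v i| := by
    calc |v i| = α * |∑ j, P i j * v j| := by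
          rw [hkey i, abs_mul, abs_of_pos hα0]
      _ ≤ α * ∑ j, P i j * |v i| := by
          refine mul_le_mul_of_nonneg_left ?_ hα0.le
          calc |∑ j, P i j * v j| ≤ ∑ j, |P i j * v j| := Finset.abs_sum_le_sum_abs _ _
            _ ≤ ∑ j, P i j * |v i| := by
                refine Finset.sum_le_sum fun j _ => ?_
                rw [abs_mul, abs_of_nonneg (hP.1 i j)]
                exact mul_le_mul_of_nonneg_left (hi j (Finset.mem_univ j)) (hP.1 i j)
      _ = α * ((∑ j, P i j) * |v i|) := by rw [← Finset.sum_mul]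
      _ ≤ α * (1 * |v i|) := by
          refine mul_le_mul_of_nonneg_left ?_ hα0.le
          exact mul_le_mul_of_nonneg_right (hP.2 i) (abs_nonneg _)
      _ = α * |v i| := by ring
  have hvi : |v i| = 0 := by nlinarith [abs_nonneg (v i)]
  apply hv
  funext j
  have hj := hi j (Finset.mem_univ j)
  rw [hvi] at hj
  show v j = 0
  exact abs_eq_zero.mp (le_antisymm hj (abs_nonneg _))

lemma smul_pow_entry {P : Matrix S S ℝ} (α : ℝ) (n : ℕ) (s s' : S) :
    ((α • P) ^ n) s s' = α ^ n * (P ^ n) s s' := by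
  rw [smul_pow]
  simp

lemma tendsto_partial_sums {P : Matrix S S ℝ} (hP : Substochastic P) {α : ℝ}
    (hα0 : 0 < α) (hα1 : α < 1) (s s' : S) :
    Tendsto (fun N => ∑ i ∈ Finset.range N, ((α • P) ^ i) s s') atTop
      (𝓝 ((1 - α • P)⁻¹ s s')) := by
  have hu : IsUnit (1 - α • P).det := isUnit_det_one_sub_smul hP hα0 hα1
  set x := α • P with hx
  have hsum : ∀ N, (∑ i ∈ Finset.range N, x ^ i) =
      (1 - x)⁻¹ - x ^ N * (1 - x)⁻¹ := by
    intro N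
    have h1 : (∑ i ∈ Finset.range N, x ^ i) * (1 - x) = 1 - x ^ N := by
      have h := geom_sum_mul x N
      calc (∑ i ∈ Finset.range N, x ^ i) * (1 - x)
          = -((∑ i ∈ Finset.range N, x ^ i) * (x - 1)) := by noncomm_ring
        _ = -(x ^ N - 1) := by rw [h]
        _ = 1 - x ^ N := neg_sub _ _
    calc (∑ i ∈ Finset.range N, x ^ i)
        = (∑ i ∈ Finset.range N, x ^ i) * ((1 - x) * (1 - x)⁻¹) := by
          rw [Matrix.mul_nonsing_inv _ hu, mul_one]
      _ = ((∑ i ∈ Finset.range N, x ^ i) * (1 - x)) * (1 - x)⁻¹ := by rw [mul_assoc]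
      _ = (1 - x ^ N) * (1 - x)⁻¹ := by rw [h1]
      _ = (1 - x)⁻¹ - x ^ N * (1 - x)⁻¹ := by rw [sub_mul, one_mul]
  have hentry : ∀ N, (∑ i ∈ Finset.range N, (x ^ i) s s') =
      (1 - x)⁻¹ s s' - (x ^ N * (1 - x)⁻¹) s s' := by
    intro N
    have h := congrFun (congrFun (hsum N) s) s'
    simpa [Matrix.sub_apply, Matrix.sum_apply] using h
  have herr : Tendsto (fun N => (x ^ N * (1 - x)⁻¹) s s') atTop (𝓝 0) := by
    refine squeeze_zero_norm (a := fun N => α ^ N * ∑ j, |(1 - x)⁻¹ j s'|) ?_ ?_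
    · intro N
      rw [Matrix.mul_apply]
      calc ‖∑ j, (x ^ N) s j * (1 - x)⁻¹ j s'‖
          ≤ ∑ j, |(x ^ N) s j * (1 - x)⁻¹ j s'| := Finset.abs_sum_le_sum_abs _ _
        _ ≤ ∑ j, α ^ N * |(1 - x)⁻¹ j s'| := by
            refine Finset.sum_le_sum fun j _ => ?_
            rw [abs_mul]
            refine mul_le_mul_of_nonneg_right ?_ (abs_nonneg _)
            rw [hx, smul_pow_entry]
            have h1 := (substochastic_pow hP N).1 s j
            have h2 := substochastic_entry_le_one (substochastic_pow hP N) s j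
            rw [abs_mul, abs_of_nonneg h1, abs_of_pos (pow_pos hα0 N)]
            nlinarith [pow_pos hα0 N]
        _ = α ^ N * ∑ j, |(1 - x)⁻¹ j s'| := by rw [Finset.mul_sum]
    · have h := tendsto_pow_atTop_nhds_zero_of_lt_one hα0.le hα1
      simpa using h.mul_const (∑ j, |(1 - x)⁻¹ j s'|)
  have h : Tendsto (fun N => (1 - x)⁻¹ s s' - (x ^ N * (1 - x)⁻¹) s s') atTop
      (𝓝 ((1 - x)⁻¹ s s' - 0)) := tendsto_const_nhds.sub herr
  rw [sub_zero] at h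
  exact h.congr fun N => (hentry N).symm

lemma pow_entry_mono {Q P : Matrix S S ℝ} (hQ : Substochastic Q) (hP : Substochastic P)
    (hQP : ∀ s s', Q s s' ≤ P s s') (n : ℕ) (s s' : S) :
    (Q ^ n) s s' ≤ (P ^ n) s s' := by
  induction n generalizing s s' with
  | zero => simp
  | succ n ih =>
    rw [pow_succ, pow_succ, Matrix.mul_apply, Matrix.mul_apply]
    refine Finset.sum_le_sum fun j _ => ?_
    exact mul_le_mul (ih s j) (hQP j s') (hQ.1 j s') ((substochastic_pow hP n).1 s j)

end Aux

theorem stmt_3 {S : Type*} [Fintype S] [Nonempty S] [DecidableEq S]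
    (Q P : Matrix S S ℝ) (hQ : Substochastic Q) (hP : Substochastic P)
    (hQP : ∀ s s', Q s s' ≤ P s s')
    (α : ℝ) (hα0 : 0 < α) (hα1 : α < 1) :
    ∀ s s', (1 - α • Q)⁻¹ s s' ≤ (1 - α • P)⁻¹ s s' := by
  intro s s'
  refine le_of_tendsto_of_tendsto' (tendsto_partial_sums hQ hα0 hα1 s s')
    (tendsto_partial_sums hP hα0 hα1 s s') fun N => ?_
  refine Finset.sum_le_sum fun i _ => ?_
  rw [smul_pow_entry, smul_pow_entry]
  exact mul_le_mul_of_nonneg_left (pow_entry_mono hQ hP hQP i s s') (pow_pos hα0 i).le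
end

section
/- Let S be a nonempty finite type, let P : Matrix S S ℝ be substochastic, let α be a real number with 0 < α < 1, and let γ : S → ℝ satisfy γ s > 0 for every s. Define w : S → ℝ by w s' = (1-α) * ∑_s γ s * (1 - α • P)⁻¹ s s' (the scaled row-vector–matrix product). Then w s' ≥ (1-α) * γ s' for every s'; in particular w s' > 0 for every s'. -/
open Matrix BigOperators

section Aux

attribute [local instance] Matrix.linftyOpNormedRing

variable {S : Type*} [Fintype S] [DecidableEq S]

private lemma aux_norm_le {A : Matrix S S ℝ} {c : ℝ} (hc : 0 ≤ c)
    (h : ∀ i, ∑ j, |A i j| ≤ c) : ‖A‖ ≤ c := by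
  rw [Matrix.linfty_opNorm_def]
  have : (Finset.univ.sup fun i : S => ∑ j : S, ‖A i j‖₊) ≤ ⟨c, hc⟩ := by
    apply Finset.sup_le
    intro i _
    apply NNReal.coe_le_coe.mp
    push_cast
    exact (show _ ≤ c by simpa [Real.norm_eq_abs] using h i)
  exact_mod_cast this

private lemma aux_entry_le (A : Matrix S S ℝ) (i j : S) : |A i j| ≤ ‖A‖ := by
  rw [Matrix.linfty_opNorm_def]
  have h1 : ‖A i j‖₊ ≤ ∑ j' : S, ‖A i j'‖₊ :=
    Finset.single_le_sum (f := fun j' => ‖A i j'‖₊) (fun _ _ => zero_le) (Finset.mem_univ j)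
  have h2 : (∑ j' : S, ‖A i j'‖₊) ≤ Finset.univ.sup fun i : S => ∑ j' : S, ‖A i j'‖₊ :=
    Finset.le_sup (f := fun i : S => ∑ j' : S, ‖A i j'‖₊) (Finset.mem_univ i)
  have := h1.trans h2
  rw [← NNReal.coe_le_coe] at this
  simpa [Real.norm_eq_abs] using this

private lemma aux_key [Nonempty S]
    (P : Matrix S S ℝ) (hP : Substochastic P)
    (α : ℝ) (hα0 : 0 < α) (hα1 : α < 1) :
    ∀ i j, (1 : Matrix S S ℝ) i j ≤ (1 - α • P)⁻¹ i j := by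
  obtain ⟨hP0, hP1⟩ := hP
  set A : Matrix S S ℝ := α • P with hA
  -- entries of A are nonnegative
  have hA0 : ∀ i j, 0 ≤ A i j := fun i j => by
    simp only [hA, Matrix.smul_apply, smul_eq_mul]
    exact mul_nonneg hα0.le (hP0 i j)
  -- entries of powers of A are nonnegative
  have hpow : ∀ n, ∀ i j, 0 ≤ (A ^ n) i j := by
    intro n
    induction n with
    | zero => intro i j; simp only [pow_zero, Matrix.one_apply]; positivity
    | succ n ih =>
      intro i j
      rw [pow_succ, Matrix.mul_apply]
      exact Finset.sum_nonneg fun k _ => mul_nonneg (ih i k) (hA0 k j)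
  -- 1 - A is invertible
  have hdet : IsUnit (1 - A).det := by
    rw [isUnit_iff_ne_zero]
    intro hd
    obtain ⟨v, hv, hv0⟩ := (Matrix.exists_mulVec_eq_zero_iff).2 hd
    obtain ⟨i0, -, hi0⟩ := Finset.exists_max_image Finset.univ (fun i => |v i|)
      ⟨Classical.arbitrary S, Finset.mem_univ _⟩
    have hm : 0 < |v i0| := by
      rcases Function.ne_iff.mp hv with ⟨i, hi⟩
      exact lt_of_lt_of_le (abs_pos.mpr hi) (hi0 i (Finset.mem_univ i))
    have hvi : v i0 = α * ∑ j, P i0 j * v j := by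
      have h := congrFun hv0 i0
      have h2 : ((1 - A) *ᵥ v) i0 = v i0 - α * ∑ j, P i0 j * v j := by
        simp [Matrix.sub_mulVec, Matrix.one_mulVec, hA, Matrix.smul_mulVec,
          Matrix.mulVec, dotProduct, sub_mul, Finset.sum_sub_distrib,
          Matrix.one_apply, Finset.sum_ite_eq, Finset.mul_sum, ite_mul, mul_assoc]
      rw [h2] at h
      simp only [Pi.zero_apply] at h
      linarith
    have : |v i0| ≤ α * |v i0| := by
      calc |v i0| = α * |∑ j, P i0 j * v j| := by rw [hvi, abs_mul, abs_of_pos hα0]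
        _ ≤ α * ∑ j, |P i0 j * v j| :=
            mul_le_mul_of_nonneg_left (Finset.abs_sum_le_sum_abs _ _) hα0.le
        _ ≤ α * ∑ j, P i0 j * |v i0| := by
            apply mul_le_mul_of_nonneg_left _ hα0.le
            apply Finset.sum_le_sum
            intro j _
            rw [abs_mul, abs_of_nonneg (hP0 i0 j)]
            exact mul_le_mul_of_nonneg_left (hi0 j (Finset.mem_univ j)) (hP0 i0 j)
        _ = α * ((∑ j, P i0 j) * |v i0|) := by rw [← Finset.sum_mul]
        _ ≤ α * (1 * |v i0|) := by
            apply mul_le_mul_of_nonneg_left _ hα0.le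
            exact mul_le_mul_of_nonneg_right (hP1 i0) (abs_nonneg _)
        _ = α * |v i0| := by ring
    nlinarith
  set M : Matrix S S ℝ := (1 - A)⁻¹ with hM
  have hmul : (1 - A) * M = 1 := Matrix.mul_nonsing_inv _ hdet
  have hrec : M = 1 + A * M := by
    rw [sub_mul, one_mul] at hmul
    rw [← hmul]
    abel
  -- partial sums
  have hpart : ∀ n, M = (∑ k ∈ Finset.range n, A ^ k) + A ^ n * M := by
    intro n
    induction n with
    | zero => simp
    | succ n ih =>
      rw [Finset.sum_range_succ]
      calc M = ∑ k ∈ Finset.range n, A ^ k + A ^ n * M := ih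
        _ = ∑ k ∈ Finset.range n, A ^ k + A ^ n * (1 + A * M) := by rw [← hrec]
        _ = ∑ k ∈ Finset.range n, A ^ k + A ^ n + A ^ (n + 1) * M := by
            rw [mul_add, mul_one, pow_succ, mul_assoc]; abel
  -- norm bound
  have hAnorm : ‖A‖ ≤ α := by
    apply aux_norm_le hα0.le
    intro i
    calc ∑ j, |A i j| = α * ∑ j, P i j := by
          rw [Finset.mul_sum]
          refine Finset.sum_congr rfl fun j _ => ?_
          rw [abs_of_nonneg (hA0 i j)]
          simp [hA]
      _ ≤ α * 1 := mul_le_mul_of_nonneg_left (hP1 i) hα0.le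
      _ = α := mul_one α
  intro i j
  -- for every ε > 0, (1 : Matrix) i j ≤ M i j + ε
  refine le_of_forall_pos_le_add ?_
  intro ε hε
  obtain ⟨n, hn⟩ := exists_pow_lt_of_lt_one (div_pos hε (by positivity : (0:ℝ) < ‖M‖ + 1)) hα1
  set N := max n 1 with hN
  have hαN : α ^ N ≤ α ^ n :=
    pow_le_pow_of_le_one hα0.le hα1.le (le_max_left n 1)
  have hMij : M i j = (∑ k ∈ Finset.range N, A ^ k) i j + (A ^ N * M) i j := by
    rw [← Matrix.add_apply, ← hpart N]
  have hsum : (1 : Matrix S S ℝ) i j ≤ (∑ k ∈ Finset.range N, A ^ k) i j := by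
    rw [Matrix.sum_apply]
    have h0mem : 0 ∈ Finset.range N := Finset.mem_range.mpr (lt_of_lt_of_le one_pos (le_max_right n 1))
    calc (1 : Matrix S S ℝ) i j = (A ^ 0) i j := by rw [pow_zero]
      _ ≤ ∑ k ∈ Finset.range N, (A ^ k) i j :=
          Finset.single_le_sum (fun k _ => hpow k i j) h0mem
  have htail : -(ε) ≤ (A ^ N * M) i j := by
    have h1 : |(A ^ N * M) i j| ≤ ‖A ^ N * M‖ := aux_entry_le _ i j
    have h2 : ‖A ^ N * M‖ ≤ ‖A‖ ^ N * ‖M‖ :=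
      le_trans (norm_mul_le _ _) (mul_le_mul_of_nonneg_right (norm_pow_le' _ (lt_of_lt_of_le one_pos (le_max_right n 1))) (norm_nonneg _))
    have h3 : ‖A‖ ^ N ≤ α ^ N := pow_le_pow_left₀ (norm_nonneg _) hAnorm N
    have h4 : α ^ N * ‖M‖ ≤ α ^ n * (‖M‖ + 1) := by
      have := norm_nonneg M
      nlinarith [pow_nonneg hα0.le n, pow_nonneg hα0.le N]
    have h5 : α ^ n * (‖M‖ + 1) < ε :=
      (lt_div_iff₀ (by positivity : (0:ℝ) < ‖M‖ + 1)).mp hn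
    have h6 : ‖A‖ ^ N * ‖M‖ ≤ α ^ N * ‖M‖ :=
      mul_le_mul_of_nonneg_right h3 (norm_nonneg M)
    have h7 := (abs_le.mp h1).1
    linarith
  rw [hMij]
  linarith [hsum, htail]

end Aux

theorem stmt_4 {S : Type*} [Fintype S] [Nonempty S] [DecidableEq S]
    (P : Matrix S S ℝ) (hP : Substochastic P)
    (α : ℝ) (hα0 : 0 < α) (hα1 : α < 1)
    (γ : S → ℝ) (hγ : ∀ s, 0 < γ s)
    (w : S → ℝ) (hw : ∀ s', w s' = (1 - α) * ∑ s, γ s * (1 - α • P)⁻¹ s s') :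
    (∀ s', (1 - α) * γ s' ≤ w s') ∧ ∀ s', 0 < w s' := by
  have hkey := aux_key P hP α hα0 hα1
  have hmain : ∀ s', (1 - α) * γ s' ≤ w s' := by
    intro s'
    rw [hw s']
    have hsum : γ s' ≤ ∑ s, γ s * (1 - α • P)⁻¹ s s' := by
      have h1 : ∑ s, γ s * (1 : Matrix S S ℝ) s s' ≤ ∑ s, γ s * (1 - α • P)⁻¹ s s' :=
        Finset.sum_le_sum fun s _ => mul_le_mul_of_nonneg_left (hkey s s') (hγ s).le
      have h2 : ∑ s, γ s * (1 : Matrix S S ℝ) s s' = γ s' := by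
        simp [Matrix.one_apply, Finset.sum_ite_eq]
      linarith
    exact mul_le_mul_of_nonneg_left hsum (by linarith)
  refine ⟨hmain, fun s' => lt_of_lt_of_le ?_ (hmain s')⟩
  have := hγ s'
  nlinarith
end

section
/- Let S be a nonempty finite type, let Q, P : Matrix S S ℝ be substochastic with Q ≤ P entrywise, let α be a real number with 0 < α < 1, and let γ : S → ℝ satisfy γ s ≥ 0 for every s. Then for every s', ∑_s γ s * (1 - α • Q)⁻¹ s s' ≤ ∑_s γ s * (1 - α • P)⁻¹ s s'. -/
open Matrix BigOperators

section Aux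

variable {S : Type*} [Fintype S] [Nonempty S] [DecidableEq S]

attribute [local instance] Matrix.linftyOpNormedRing Matrix.linftyOpNormedAlgebra
  Matrix.linftyOpNormedSpace

private lemma entry_norm_le (A : Matrix S S ℝ) (i j : S) : ‖A i j‖ ≤ ‖A‖ := by
  rw [Matrix.linfty_opNorm_def]
  have h1 : ‖A i j‖₊ ≤ ∑ j', ‖A i j'‖₊ :=
    Finset.single_le_sum (f := fun j' => ‖A i j'‖₊) (fun _ _ => zero_le) (Finset.mem_univ j)
  have h2 : (∑ j', ‖A i j'‖₊) ≤ (Finset.univ : Finset S).sup fun i' => ∑ j', ‖A i' j'‖₊ :=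
    Finset.le_sup (f := fun i' => ∑ j', ‖A i' j'‖₊) (Finset.mem_univ i)
  exact_mod_cast h1.trans h2

private lemma eval_continuous (i j : S) : Continuous fun A : Matrix S S ℝ => A i j := by
  have : LipschitzWith 1 fun A : Matrix S S ℝ => A i j := by
    apply LipschitzWith.of_dist_le_mul
    intro A B
    rw [NNReal.coe_one, one_mul]
    have : dist (A i j) (B i j) = ‖(A - B) i j‖ := by
      simp [dist_eq_norm]
    rw [this, dist_eq_norm]
    exact entry_norm_le (A - B) i j
  exact this.continuous

private lemma pow_entry_nonneg {M : Matrix S S ℝ} (h : ∀ i j, 0 ≤ M i j) (n : ℕ) :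
    ∀ i j, 0 ≤ (M ^ n) i j := by
  induction n with
  | zero =>
    intro i j
    rw [pow_zero]
    by_cases hij : i = j <;> simp [Matrix.one_apply, hij]
  | succ n ih =>
    intro i j
    rw [pow_succ, Matrix.mul_apply]
    exact Finset.sum_nonneg fun k _ => mul_nonneg (ih i k) (h k j)

private lemma norm_smul_lt {M : Matrix S S ℝ} (hM : Substochastic M) {α : ℝ}
    (hα0 : 0 < α) (hα1 : α < 1) : ‖α • M‖ < 1 := by
  have hMnorm : ‖M‖ ≤ 1 := by
    rw [Matrix.linfty_opNorm_def]
    have : ((Finset.univ : Finset S).sup fun i => ∑ j, ‖M i j‖₊) ≤ 1 := by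
      apply Finset.sup_le
      intro i _
      have : (↑(∑ j, ‖M i j‖₊) : ℝ) ≤ 1 := by
        push_cast
        calc ∑ j, (‖M i j‖₊ : ℝ) = ∑ j, M i j := by
              refine Finset.sum_congr rfl fun j _ => ?_
              simp [Real.norm_of_nonneg (hM.1 i j)]
          _ ≤ 1 := hM.2 i
      exact_mod_cast this
    exact_mod_cast this
  calc ‖α • M‖ = |α| * ‖M‖ := by rw [norm_smul]; rfl
    _ ≤ |α| * 1 := by
        apply mul_le_mul_of_nonneg_left hMnorm (abs_nonneg α)
    _ = α := by rw [mul_one, abs_of_pos hα0]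
    _ < 1 := hα1

private lemma inv_key {M : Matrix S S ℝ} (hM : Substochastic M) {α : ℝ}
    (hα0 : 0 < α) (hα1 : α < 1) :
    IsUnit (1 - α • M) ∧ ∀ i j, 0 ≤ (1 - α • M)⁻¹ i j := by
  haveI : CompleteSpace (Matrix S S ℝ) := FiniteDimensional.complete ℝ _
  have hnorm := norm_smul_lt hM hα0 hα1
  refine ⟨isUnit_one_sub_of_norm_lt_one hnorm, fun i j => ?_⟩
  rw [Matrix.nonsing_inv_eq_ringInverse]
  have hs := hasSum_geom_series_inverse (α • M) hnorm
  have hsmul : ∀ i j, 0 ≤ (α • M) i j := fun i j =>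
    mul_nonneg hα0.le (hM.1 i j)
  let e : Matrix S S ℝ →+ ℝ := AddMonoidHom.mk' (fun A => A i j) (fun _ _ => rfl)
  have hs2 : HasSum (fun n : ℕ => ((α • M) ^ n) i j) ((Ring.inverse (1 - α • M)) i j) :=
    hs.map e (eval_continuous i j)
  exact hasSum_le (fun n => pow_entry_nonneg hsmul n i j) hasSum_zero hs2

end Aux

theorem stmt_5 {S : Type*} [Fintype S] [Nonempty S] [DecidableEq S]
    (Q P : Matrix S S ℝ) (hQ : Substochastic Q) (hP : Substochastic P)
    (hQP : ∀ s s', Q s s' ≤ P s s')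
    (α : ℝ) (hα0 : 0 < α) (hα1 : α < 1)
    (γ : S → ℝ) (hγ : ∀ s, 0 ≤ γ s) :
    ∀ s', ∑ s, γ s * (1 - α • Q)⁻¹ s s' ≤ ∑ s, γ s * (1 - α • P)⁻¹ s s' := by
  obtain ⟨hAunit, hAinv⟩ := inv_key hQ hα0 hα1
  obtain ⟨hBunit, hBinv⟩ := inv_key hP hα0 hα1
  set A : Matrix S S ℝ := 1 - α • Q with hA
  set B : Matrix S S ℝ := 1 - α • P with hB
  have hAdet : IsUnit A.det := (Matrix.isUnit_iff_isUnit_det A).mp hAunit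
  have hBdet : IsUnit B.det := (Matrix.isUnit_iff_isUnit_det B).mp hBunit
  have key : A⁻¹ * (A - B) * B⁻¹ = B⁻¹ - A⁻¹ := by
    rw [Matrix.mul_sub, Matrix.nonsing_inv_mul A hAdet, Matrix.sub_mul, one_mul,
      Matrix.mul_assoc, Matrix.mul_nonsing_inv B hBdet, Matrix.mul_one]
  have hABnn : ∀ i j, 0 ≤ (A - B) i j := by
    intro i j
    have : (A - B) i j = α * (P i j - Q i j) := by
      simp [hA, hB, Matrix.sub_apply, Matrix.smul_apply, smul_eq_mul]
      ring
    rw [this]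
    exact mul_nonneg hα0.le (sub_nonneg.mpr (hQP i j))
  have hdiff : ∀ i j, 0 ≤ (B⁻¹ - A⁻¹) i j := by
    intro i j
    rw [← key, Matrix.mul_apply]
    refine Finset.sum_nonneg fun k _ => mul_nonneg ?_ (hBinv k j)
    rw [Matrix.mul_apply]
    exact Finset.sum_nonneg fun l _ => mul_nonneg (hAinv i l) (hABnn l k)
  intro s'
  apply Finset.sum_le_sum
  intro s _
  apply mul_le_mul_of_nonneg_left _ (hγ s)
  have := hdiff s s'
  rw [Matrix.sub_apply] at this
  linarith
end

section
/- With the CMDP data and uncertainty-set data below, assume γ s > 0 for every s, and let u be an admissible deviation. Then the matrix P_f(u) is stochastic (entrywise nonnegative with all row sums equal to 1), the matrix 1 - α • P_f(u) is invertible, and, defining w : S → ℝ by w s' = (1-α) * ∑_s γ s * (1 - α • P_f(u))⁻¹ s s' and z : (s : S) → (A s × S) → ℝ by z s (a, s') = w s * u s a s', the pair (w, z) belongs to the inner-problem feasible set Q, and ∑_s w s * c_f s = (1-α) * (γ ⬝ᵥ ((1 - α • P_f(u))⁻¹).mulVec c_f). -/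
open Matrix BigOperators

/-- The Euclidean norm of a vector indexed by a finite type. -/
noncomputable def euclNorm {n : Type*} [Fintype n] (v : n → ℝ) : ℝ :=
  Real.sqrt (∑ i, v i ^ 2)


lemma aux_isUnit {S : Type*} [Fintype S] [Nonempty S] [DecidableEq S]
    (P : Matrix S S ℝ) (hP0 : ∀ i j, 0 ≤ P i j) (hP1 : ∀ i, ∑ j, P i j = 1)
    {α : ℝ} (hα0 : 0 < α) (hα1 : α < 1) : IsUnit (1 - α • P) := by
  rw [← Matrix.mulVec_injective_iff_isUnit]
  have key : ∀ v : S → ℝ, (1 - α • P).mulVec v = 0 → v = 0 := by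
    intro v hv
    have hv' : ∀ i, v i = α * ∑ j, P i j * v j := by
      intro i
      have h := congr_fun hv i
      simp [Matrix.mulVec, dotProduct, Matrix.sub_apply, Matrix.smul_apply,
        Matrix.one_apply, sub_mul, ite_mul, Finset.sum_sub_distrib, mul_assoc] at h
      rw [Finset.mul_sum]
      linarith [h]
    obtain ⟨i0, -, hi0⟩ := Finset.exists_max_image Finset.univ (fun i => |v i|)
      ⟨Classical.arbitrary S, Finset.mem_univ _⟩
    have hmax : ∀ j, |v j| ≤ |v i0| := fun j => hi0 j (Finset.mem_univ _)
    have hle : |v i0| ≤ α * |v i0| := by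
      calc |v i0| = |α * ∑ j, P i0 j * v j| := by rw [← hv' i0]
        _ = α * |∑ j, P i0 j * v j| := by rw [abs_mul, abs_of_pos hα0]
        _ ≤ α * ∑ j, |P i0 j * v j| := by
            gcongr; exact Finset.abs_sum_le_sum_abs _ _
        _ ≤ α * ∑ j, P i0 j * |v i0| := by
            gcongr with j
            rw [abs_mul, abs_of_nonneg (hP0 i0 j)]
            exact mul_le_mul_of_nonneg_left (hmax j) (hP0 i0 j)
        _ = α * |v i0| := by rw [← Finset.sum_mul, hP1]; ring
    have h0 : |v i0| ≤ 0 := by nlinarith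
    funext j
    have hj : |v j| ≤ 0 := le_trans (hmax j) h0
    simpa using le_antisymm hj (abs_nonneg _)
  intro a b hab
  have h : (1 - α • P).mulVec (a - b) = 0 := by
    rw [Matrix.mulVec_sub, hab, sub_self]
  have h2 := key _ h
  funext i
  have := congr_fun h2 i
  simp at this; linarith

lemma aux_inv_nonneg {S : Type*} [Fintype S] [Nonempty S] [DecidableEq S]
    (P : Matrix S S ℝ) (hP0 : ∀ i j, 0 ≤ P i j) (hP1 : ∀ i, ∑ j, P i j = 1)
    {α : ℝ} (hα0 : 0 < α) (hα1 : α < 1) : ∀ i j, 0 ≤ (1 - α • P)⁻¹ i j := by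
  have hU := aux_isUnit P hP0 hP1 hα0 hα1
  have hdet : IsUnit (1 - α • P).det := (Matrix.isUnit_iff_isUnit_det _).mp hU
  have hmul : (1 - α • P) * (1 - α • P)⁻¹ = 1 := Matrix.mul_nonsing_inv _ hdet
  set N := (1 - α • P)⁻¹ with hN
  have hentry : ∀ i j, N i j = (if i = j then (1:ℝ) else 0) + α * ∑ k, P i k * N k j := by
    intro i j
    have h := congr_fun (congr_fun hmul i) j
    simp [Matrix.mul_apply, Matrix.sub_apply, Matrix.smul_apply, Matrix.one_apply,
      sub_mul, ite_mul, Finset.sum_sub_distrib, mul_assoc] at h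
    rw [Finset.mul_sum]
    linarith [h]
  intro i j
  obtain ⟨i0, -, hi0⟩ := Finset.exists_min_image Finset.univ (fun i => N i j)
    ⟨Classical.arbitrary S, Finset.mem_univ _⟩
  have hmin : ∀ k, N i0 j ≤ N k j := fun k => hi0 k (Finset.mem_univ _)
  have hμ : 0 ≤ N i0 j := by
    have hsum : ∑ k, P i0 k * N i0 j ≤ ∑ k, P i0 k * N k j :=
      Finset.sum_le_sum (fun k _ => mul_le_mul_of_nonneg_left (hmin k) (hP0 i0 k))
    have hsum2 : ∑ k, P i0 k * N i0 j = N i0 j := by rw [← Finset.sum_mul, hP1]; ring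
    have hδ : (0:ℝ) ≤ (if i0 = j then (1:ℝ) else 0) := by positivity
    nlinarith [hentry i0 j, mul_le_mul_of_nonneg_left hsum hα0.le]
  exact le_trans hμ (hmin i)

lemma euclNorm_smul_nonneg {n : Type*} [Fintype n] {c : ℝ} (hc : 0 ≤ c) (v : n → ℝ) :
    euclNorm (c • v) = c * euclNorm v := by
  unfold euclNorm
  have : ∑ i, (c • v) i ^ 2 = c ^ 2 * ∑ i, v i ^ 2 := by
    rw [Finset.mul_sum]; apply Finset.sum_congr rfl; intro i _; simp [mul_pow]
  rw [this, Real.sqrt_mul (by positivity), Real.sqrt_sq hc]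
theorem stmt_9 {S : Type*} [Fintype S] [Nonempty S] [DecidableEq S]
    {A : S → Type*} [∀ s, Fintype (A s)] [∀ s, Nonempty (A s)]
    -- stationary policy
    (f : (s : S) → A s → ℝ) (hf0 : ∀ s a, 0 ≤ f s a) (hf1 : ∀ s, ∑ a, f s a = 1)
    -- observed transition probabilities
    (pbar : (s : S) → A s → S → ℝ)
    (hpbar0 : ∀ s a s', 0 ≤ pbar s a s') (hpbar1 : ∀ s a, ∑ s', pbar s a s' = 1)
    (α : ℝ) (hα0 : 0 < α) (hα1 : α < 1)
    -- initial distribution, positive everywhere (Assumption 3.2)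
    (γ : S → ℝ) (hγpos : ∀ s, 0 < γ s) (hγ1 : ∑ s, γ s = 1)
    -- cost vector
    (cf : S → ℝ)
    -- uncertainty-set data
    (ℓp ℓsc : S → ℕ)
    (B : (s : S) → Matrix (Fin (ℓp s)) (A s × S) ℝ) (b : (s : S) → Fin (ℓp s) → ℝ)
    (M : (s : S) → Matrix (A s × S) (Fin (ℓsc s)) ℝ) (m : (s : S) → Fin (ℓsc s) → ℝ)
    (x : (s : S) → A s × S → ℝ) (y : S → ℝ)
    -- an admissible deviation
    (u : (s : S) → A s → S → ℝ)
    (hu1 : ∀ s, ∀ i, (B s).mulVec (fun p : A s × S => u s p.1 p.2) i ≤ b s i)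
    (hu2 : ∀ s, euclNorm ((M s)ᵀ.mulVec (fun p : A s × S => u s p.1 p.2) + m s)
             ≤ x s ⬝ᵥ (fun p : A s × S => u s p.1 p.2) + y s)
    (hu3 : ∀ s a s', 0 ≤ pbar s a s' + u s a s')
    (hu4 : ∀ s a, ∑ s', u s a s' = 0)
    -- perturbed and observed transition matrices under f
    (Pfu : Matrix S S ℝ)
    (hPfu : ∀ s s', Pfu s s' = ∑ a, f s a * (pbar s a s' + u s a s'))
    (Pbarf : Matrix S S ℝ)
    (hPbarf : ∀ s s', Pbarf s s' = ∑ a, f s a * pbar s a s')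
    -- the constructed pair (w, z)
    (w : S → ℝ) (hw : ∀ s', w s' = (1 - α) * ∑ s, γ s * (1 - α • Pfu)⁻¹ s s')
    (z : (s : S) → A s × S → ℝ) (hz : ∀ s a s', z s (a, s') = w s * u s a s') :
    -- P_f(u) is stochastic
    ((∀ s s', 0 ≤ Pfu s s') ∧ (∀ s, ∑ s', Pfu s s' = 1)) ∧
    -- 1 - α • P_f(u) is invertible
    IsUnit (1 - α • Pfu) ∧
    -- (w, z) belongs to the inner-problem feasible set Q
    ((∀ s, ∀ i, (B s).mulVec (z s) i ≤ w s * b s i) ∧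
     (∀ s, euclNorm ((M s)ᵀ.mulVec (z s) + w s • m s) ≤ x s ⬝ᵥ z s + y s * w s) ∧
     (∀ s, (1 - α) * γ s ≤ w s) ∧
     (∀ s' : S,
        (∑ s, w s * ((if s = s' then (1 : ℝ) else 0) - α * Pbarf s s'))
          - α * ∑ s, ∑ a, f s a * z s (a, s') = (1 - α) * γ s')) ∧
    -- the objective values agree
    ∑ s, w s * cf s = (1 - α) * (γ ⬝ᵥ ((1 - α • Pfu)⁻¹).mulVec cf) := by
  -- stochasticity
  have hP0 : ∀ s s', 0 ≤ Pfu s s' := by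
    intro s s'; rw [hPfu]
    exact Finset.sum_nonneg fun a _ => mul_nonneg (hf0 s a) (hu3 s a s')
  have hP1 : ∀ s, ∑ s', Pfu s s' = 1 := by
    intro s
    simp_rw [hPfu]
    rw [Finset.sum_comm]
    rw [show ∑ a, ∑ s', f s a * (pbar s a s' + u s a s') = ∑ a : A s, f s a from
      Finset.sum_congr rfl fun a _ => by
        rw [← Finset.mul_sum, Finset.sum_add_distrib, hpbar1, hu4]; ring]
    exact hf1 s
  have hUnit := aux_isUnit Pfu hP0 hP1 hα0 hα1
  have hN0 := aux_inv_nonneg Pfu hP0 hP1 hα0 hα1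
  have hdet : IsUnit (1 - α • Pfu).det := (Matrix.isUnit_iff_isUnit_det _).mp hUnit
  have hNM : (1 - α • Pfu)⁻¹ * (1 - α • Pfu) = 1 := Matrix.nonsing_inv_mul _ hdet
  have hα1' : (0:ℝ) < 1 - α := by linarith
  -- w is nonnegative
  have hw0 : ∀ s', 0 ≤ w s' := by
    intro s'; rw [hw]
    exact mul_nonneg hα1'.le (Finset.sum_nonneg fun s _ =>
      mul_nonneg (hγpos s).le (hN0 s s'))
  -- key identity
  have hkey : ∀ s', w s' - α * ∑ s, w s * Pfu s s' = (1 - α) * γ s' := by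
    intro s'
    have h1 : ∑ s, w s * ((1 - α • Pfu) s s') = (1 - α) * γ s' := by
      have hNMe : ∀ t, ∑ s, (1 - α • Pfu)⁻¹ t s * (1 - α • Pfu) s s'
          = (if t = s' then (1:ℝ) else 0) := by
        intro t
        have := congr_fun (congr_fun hNM t) s'
        simpa [Matrix.mul_apply, Matrix.one_apply] using this
      calc ∑ s, w s * ((1 - α • Pfu) s s')
          = ∑ s, ∑ t, (1 - α) * (γ t * ((1 - α • Pfu)⁻¹ t s * (1 - α • Pfu) s s')) := by
            apply Finset.sum_congr rfl; intro s _
            rw [hw s, mul_assoc, Finset.sum_mul, Finset.mul_sum]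
            apply Finset.sum_congr rfl; intro t _; ring
        _ = ∑ t, (1 - α) * (γ t * ∑ s, (1 - α • Pfu)⁻¹ t s * (1 - α • Pfu) s s') := by
            rw [Finset.sum_comm]
            apply Finset.sum_congr rfl; intro t _
            rw [Finset.mul_sum, Finset.mul_sum]
        _ = (1 - α) * γ s' := by
            simp only [hNMe, mul_ite, mul_one, mul_zero]
            rw [Finset.sum_ite_eq' Finset.univ s' (fun t => (1-α) * γ t)]
            simp
    have h2 : ∑ s, w s * ((1 - α • Pfu) s s')
        = w s' - α * ∑ s, w s * Pfu s s' := by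
      calc ∑ s, w s * ((1 - α • Pfu) s s')
          = ∑ s, ((if s = s' then w s else 0) - α * (w s * Pfu s s')) := by
            apply Finset.sum_congr rfl; intro s _
            simp only [Matrix.sub_apply, Matrix.one_apply, Matrix.smul_apply, smul_eq_mul]
            split_ifs <;> ring
        _ = w s' - α * ∑ s, w s * Pfu s s' := by
            rw [Finset.sum_sub_distrib, Finset.sum_ite_eq' Finset.univ s' w, ← Finset.mul_sum]
            simp
    rw [← h2, h1]
  have hzvec : ∀ s, z s = w s • (fun p : A s × S => u s p.1 p.2) := by
    intro s; funext p
    cases p with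
    | mk a s' => simp [hz s a s', smul_eq_mul]
  refine ⟨⟨hP0, hP1⟩, hUnit, ⟨?_, ?_, ?_, ?_⟩, ?_⟩
  · -- polyhedral constraint
    intro s i
    rw [hzvec s, Matrix.mulVec_smul]
    simpa [smul_eq_mul] using mul_le_mul_of_nonneg_left (hu1 s i) (hw0 s)
  · -- second-order cone constraint
    intro s
    have hlhs : (M s)ᵀ.mulVec (z s) + w s • m s
        = w s • ((M s)ᵀ.mulVec (fun p : A s × S => u s p.1 p.2) + m s) := by
      rw [hzvec s, Matrix.mulVec_smul, smul_add]
    rw [hlhs, euclNorm_smul_nonneg (hw0 s)]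
    have hdp : x s ⬝ᵥ z s = w s * (x s ⬝ᵥ (fun p : A s × S => u s p.1 p.2)) := by
      rw [hzvec s, dotProduct_smul, smul_eq_mul]
    rw [hdp]
    nlinarith [mul_le_mul_of_nonneg_left (hu2 s) (hw0 s)]
  · -- lower bound on w
    intro s
    have := hkey s
    have hs : 0 ≤ ∑ t, w t * Pfu t s :=
      Finset.sum_nonneg fun t _ => mul_nonneg (hw0 t) (hP0 t s)
    nlinarith
  · -- linear system
    intro s'
    have hsplit : ∀ s, Pfu s s' = Pbarf s s' + ∑ a, f s a * u s a s' := by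
      intro s
      rw [hPfu, hPbarf, ← Finset.sum_add_distrib]
      apply Finset.sum_congr rfl; intro a _; ring
    calc (∑ s, w s * ((if s = s' then (1:ℝ) else 0) - α * Pbarf s s'))
          - α * ∑ s, ∑ a, f s a * z s (a, s')
        = ∑ s, (w s * ((if s = s' then (1:ℝ) else 0) - α * Pbarf s s')
            - α * ∑ a, f s a * z s (a, s')) := by
          rw [Finset.sum_sub_distrib, Finset.mul_sum]
      _ = ∑ s, ((if s = s' then w s else 0) - α * (w s * Pfu s s')) := by
          apply Finset.sum_congr rfl; intro s _
          have hza : ∑ a, f s a * z s (a, s') = w s * ∑ a, f s a * u s a s' := by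
            rw [Finset.mul_sum]
            apply Finset.sum_congr rfl; intro a _; rw [hz s a s']; ring
          rw [hza, hsplit s]
          split_ifs <;> ring
      _ = w s' - α * ∑ s, w s * Pfu s s' := by
          rw [Finset.sum_sub_distrib, Finset.sum_ite_eq' Finset.univ s' w, ← Finset.mul_sum]
          simp
      _ = (1 - α) * γ s' := hkey s'
  · -- objective values agree
    simp only [hw, dotProduct, Matrix.mulVec]
    rw [Finset.mul_sum]
    simp_rw [Finset.mul_sum, Finset.sum_mul]
    rw [Finset.sum_comm]
    apply Finset.sum_congr rfl; intro s _
    apply Finset.sum_congr rfl; intro s' _; ring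
end

section
/- With the CMDP data and uncertainty-set data below, assume γ s > 0 for every s, and let (w, z) belong to the inner-problem feasible set Q. Then w s > 0 for every s, and, defining the deviation u by u s a s' = z s (a, s') / w s, for every s the deviation satisfies the polyhedral constraint (B s).mulVec (u s) ≤ b s entrywise and the second-order cone constraint ‖(M s)ᵀ.mulVec (u s) + m s‖ ≤ (x s) ⬝ᵥ (u s) + y s, and for every s', ∑_s w s * ((if s = s' then 1 else 0) - α * P_f(u) s s') = (1-α) * γ s'. -/
open Matrix BigOperators

lemma euclNorm_smul {n : Type*} [Fintype n] (c : ℝ) (v : n → ℝ) :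
    euclNorm (c • v) = |c| * euclNorm v := by
  unfold euclNorm
  rw [← Real.sqrt_sq_eq_abs, ← Real.sqrt_mul (sq_nonneg c)]
  congr 1
  rw [Finset.mul_sum]
  refine Finset.sum_congr rfl fun i _ => ?_
  simp [mul_pow]

theorem stmt_10 {S : Type*} [Fintype S] [Nonempty S] [DecidableEq S]
    {A : S → Type*} [∀ s, Fintype (A s)] [∀ s, Nonempty (A s)]
    -- stationary policy
    (f : (s : S) → A s → ℝ) (hf0 : ∀ s a, 0 ≤ f s a) (hf1 : ∀ s, ∑ a, f s a = 1)
    -- observed transition probabilities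
    (pbar : (s : S) → A s → S → ℝ)
    (hpbar0 : ∀ s a s', 0 ≤ pbar s a s') (hpbar1 : ∀ s a, ∑ s', pbar s a s' = 1)
    (α : ℝ) (hα0 : 0 < α) (hα1 : α < 1)
    -- initial distribution, positive everywhere (Assumption 3.2)
    (γ : S → ℝ) (hγpos : ∀ s, 0 < γ s) (hγ1 : ∑ s, γ s = 1)
    -- uncertainty-set data
    (ℓp ℓsc : S → ℕ)
    (B : (s : S) → Matrix (Fin (ℓp s)) (A s × S) ℝ) (b : (s : S) → Fin (ℓp s) → ℝ)
    (M : (s : S) → Matrix (A s × S) (Fin (ℓsc s)) ℝ) (m : (s : S) → Fin (ℓsc s) → ℝ)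
    (x : (s : S) → A s × S → ℝ) (y : S → ℝ)
    -- observed transition matrix under f
    (Pbarf : Matrix S S ℝ)
    (hPbarf : ∀ s s', Pbarf s s' = ∑ a, f s a * pbar s a s')
    -- a pair (w, z) in the inner-problem feasible set Q
    (w : S → ℝ) (z : (s : S) → A s × S → ℝ)
    (hQ1 : ∀ s, ∀ i, (B s).mulVec (z s) i ≤ w s * b s i)
    (hQ2 : ∀ s, euclNorm ((M s)ᵀ.mulVec (z s) + w s • m s) ≤ x s ⬝ᵥ z s + y s * w s)
    (hQ3 : ∀ s, (1 - α) * γ s ≤ w s)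
    (hQ4 : ∀ s' : S,
        (∑ s, w s * ((if s = s' then (1 : ℝ) else 0) - α * Pbarf s s'))
          - α * ∑ s, ∑ a, f s a * z s (a, s') = (1 - α) * γ s')
    -- the constructed deviation u
    (u : (s : S) → A s → S → ℝ) (hu : ∀ s a s', u s a s' = z s (a, s') / w s)
    -- perturbed transition matrix under f
    (Pfu : Matrix S S ℝ)
    (hPfu : ∀ s s', Pfu s s' = ∑ a, f s a * (pbar s a s' + u s a s')) :
    -- w is positive
    (∀ s, 0 < w s) ∧
    -- u satisfies the polyhedral constraints
    (∀ s, ∀ i, (B s).mulVec (fun p : A s × S => u s p.1 p.2) i ≤ b s i) ∧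
    -- u satisfies the second-order cone constraints
    (∀ s, euclNorm ((M s)ᵀ.mulVec (fun p : A s × S => u s p.1 p.2) + m s)
        ≤ x s ⬝ᵥ (fun p : A s × S => u s p.1 p.2) + y s) ∧
    -- the flow-balance equations hold for P_f(u)
    (∀ s' : S,
        ∑ s, w s * ((if s = s' then (1 : ℝ) else 0) - α * Pfu s s')
          = (1 - α) * γ s') := by
  have hw : ∀ s, 0 < w s := fun s =>
    lt_of_lt_of_le (mul_pos (by linarith) (hγpos s)) (hQ3 s)
  have hwne : ∀ s, w s ≠ 0 := fun s => (hw s).ne'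
  have hvec : ∀ s, (fun p : A s × S => u s p.1 p.2) = (w s)⁻¹ • z s := by
    intro s; funext p; simp [hu, div_eq_inv_mul]
  refine ⟨hw, ?_, ?_, ?_⟩
  · intro s i
    rw [hvec, Matrix.mulVec_smul]
    have := hQ1 s i
    have h := mul_le_mul_of_nonneg_left this (le_of_lt (inv_pos.mpr (hw s)))
    simpa [Pi.smul_apply, smul_eq_mul, inv_mul_cancel_left₀ (hwne s)] using h
  · intro s
    have key : (M s)ᵀ.mulVec (fun p : A s × S => u s p.1 p.2) + m s
        = (w s)⁻¹ • ((M s)ᵀ.mulVec (z s) + w s • m s) := by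
      rw [hvec, Matrix.mulVec_smul, smul_add, smul_smul,
        inv_mul_cancel₀ (hwne s), one_smul]
    rw [key, euclNorm_smul, abs_of_pos (inv_pos.mpr (hw s))]
    have h := mul_le_mul_of_nonneg_left (hQ2 s) (le_of_lt (inv_pos.mpr (hw s)))
    calc (w s)⁻¹ * euclNorm ((M s)ᵀ.mulVec (z s) + w s • m s)
        ≤ (w s)⁻¹ * (x s ⬝ᵥ z s + y s * w s) := h
      _ = x s ⬝ᵥ (fun p : A s × S => u s p.1 p.2) + y s := by
          rw [hvec, dotProduct_smul, smul_eq_mul]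
          field_simp
          rw [add_div, mul_div_assoc, mul_div_assoc', mul_div_cancel_left₀ _ (hwne s)]
  · intro s'
    have hz : ∀ s a, z s (a, s') = w s * u s a s' := by
      intro s a; rw [hu]; field_simp [hwne s]
    have expand : ∀ s, w s * ((if s = s' then (1:ℝ) else 0) - α * Pfu s s')
        = w s * ((if s = s' then (1:ℝ) else 0) - α * Pbarf s s')
          - α * ∑ a, f s a * z s (a, s') := by
      intro s
      have h1 : ∑ a, f s a * z s (a, s') = w s * ∑ a, f s a * u s a s' := by
        rw [Finset.mul_sum]
        exact Finset.sum_congr rfl fun a _ => by rw [hz]; ring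
      have hsum : ∑ a, f s a * (pbar s a s' + u s a s')
          = (∑ a, f s a * pbar s a s') + ∑ a, f s a * u s a s' := by
        rw [← Finset.sum_add_distrib]
        exact Finset.sum_congr rfl fun a _ => by ring
      rw [hPfu, hPbarf, h1, hsum]
      ring
    rw [Finset.sum_congr rfl fun s _ => expand s, Finset.sum_sub_distrib,
      ← Finset.mul_sum]
    exact hQ4 s'
end

section
/- With the CMDP data and uncertainty-set data below, assume γ s > 0 for every s, and assume that the polyhedral constraints enforce the probability-simplex conditions: for every s and every v : (A s × S) → ℝ with (B s).mulVec v ≤ b s entrywise, one has ∑_{s'} v (a, s') = 0 for every a and p̄ s a s' + v (a, s') ≥ 0 for all a, s'. Then the set of real numbers { (1-α) * (γ ⬝ᵥ ((1 - α • P_f(u))⁻¹).mulVec c_f) : u an admissible deviation } is equal to the set { ∑_s w s * c_f s : (w, z) ∈ Q }. In particular, the optimal values of the inner maximization problem (7) and of the second-order cone program (13) coincide. -/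
open Matrix BigOperators

/-- The key M-matrix facts: if `T` is entrywise nonnegative with row sums `α < 1`,
then `1 - T` is invertible and its inverse is entrywise nonnegative with diagonal `≥ 1`. -/
lemma aux_inv {S : Type*} [Fintype S] [DecidableEq S] {α : ℝ} (hα0 : 0 ≤ α) (hα1 : α < 1)
    (T : Matrix S S ℝ) (hT0 : ∀ i j, 0 ≤ T i j) (hTs : ∀ i, ∑ j, T i j = α) :
    (1 - T).det ≠ 0 ∧ (∀ i j, 0 ≤ (1 - T)⁻¹ i j) ∧ ∀ i, 1 ≤ (1 - T)⁻¹ i i := by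
  have hdet : (1 - T).det ≠ 0 := by
    intro hdet
    obtain ⟨v, hv0, hv⟩ := (Matrix.exists_mulVec_eq_zero_iff).2 hdet
    have hveq : ∀ i, v i = ∑ j, T i j * v j := by
      intro i
      have h := congrFun hv i
      rw [Matrix.sub_mulVec, Matrix.one_mulVec] at h
      have h5 : v i - T.mulVec v i = 0 := h
      have h4 : T.mulVec v i = ∑ j, T i j * v j := by
        simp [Matrix.mulVec, dotProduct]
      linarith
    obtain ⟨j, hj⟩ : ∃ j, v j ≠ 0 := by
      by_contra h; push_neg at h; exact hv0 (funext h)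
    obtain ⟨i₀, -, hmax⟩ := Finset.exists_max_image Finset.univ (fun i => |v i|)
      ⟨j, Finset.mem_univ j⟩
    have hpos : 0 < |v i₀| := lt_of_lt_of_le (abs_pos.2 hj) (hmax j (Finset.mem_univ j))
    have : |v i₀| ≤ α * |v i₀| := by
      calc |v i₀| = |∑ j, T i₀ j * v j| := by rw [← hveq]
        _ ≤ ∑ j, |T i₀ j * v j| := Finset.abs_sum_le_sum_abs _ _
        _ ≤ ∑ j, T i₀ j * |v i₀| := by
            apply Finset.sum_le_sum; intro k _
            rw [abs_mul, abs_of_nonneg (hT0 i₀ k)]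
            exact mul_le_mul_of_nonneg_left (hmax k (Finset.mem_univ k)) (hT0 i₀ k)
        _ = α * |v i₀| := by rw [← Finset.sum_mul, hTs]
    nlinarith
  have hunit : IsUnit (1 - T).det := isUnit_iff_ne_zero.2 hdet
  set Q := (1 - T)⁻¹ with hQdef
  have hmul : (1 - T) * Q = 1 := Matrix.mul_nonsing_inv _ hunit
  have hQ : ∀ i j, Q i j = (if i = j then (1:ℝ) else 0) + ∑ k, T i k * Q k j := by
    intro i j
    have h1 := congrFun (congrFun hmul i) j
    have h2 : ((1 - T) * Q) i j = Q i j - ∑ k, T i k * Q k j := by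
      simp [Matrix.mul_apply, Matrix.sub_apply, sub_mul, Finset.sum_sub_distrib,
        Matrix.one_apply, ite_mul]
    have h3 : (1 : Matrix S S ℝ) i j = if i = j then (1:ℝ) else 0 := by
      simp [Matrix.one_apply]
    rw [h2, h3] at h1
    linarith
  have hQ0 : ∀ i j, 0 ≤ Q i j := by
    intro i j
    by_contra hneg
    push_neg at hneg
    obtain ⟨i₀, -, hmin⟩ := Finset.exists_min_image Finset.univ (fun i => Q i j)
      ⟨i, Finset.mem_univ i⟩
    have hminneg : Q i₀ j < 0 := lt_of_le_of_lt (hmin i (Finset.mem_univ i)) hneg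
    have : α * Q i₀ j ≤ Q i₀ j := by
      calc α * Q i₀ j = ∑ k, T i₀ k * Q i₀ j := by rw [← Finset.sum_mul, hTs]
        _ ≤ ∑ k, T i₀ k * Q k j := by
            apply Finset.sum_le_sum; intro k _
            exact mul_le_mul_of_nonneg_left (hmin k (Finset.mem_univ k)) (hT0 i₀ k)
        _ ≤ (if i₀ = j then (1:ℝ) else 0) + ∑ k, T i₀ k * Q k j := by
            have : (0:ℝ) ≤ if i₀ = j then (1:ℝ) else 0 := by positivity
            linarith
        _ = Q i₀ j := (hQ i₀ j).symm
    nlinarith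
  refine ⟨hdet, hQ0, fun i => ?_⟩
  have := hQ i i
  have hsum : 0 ≤ ∑ k, T i k * Q k i :=
    Finset.sum_nonneg fun k _ => mul_nonneg (hT0 i k) (hQ0 k i)
  norm_num at this
  linarith

theorem stmt_11 {S : Type*} [Fintype S] [Nonempty S] [DecidableEq S]
    {A : S → Type*} [∀ s, Fintype (A s)] [∀ s, Nonempty (A s)]
    -- stationary policy
    (f : (s : S) → A s → ℝ) (hf0 : ∀ s a, 0 ≤ f s a) (hf1 : ∀ s, ∑ a, f s a = 1)
    -- observed transition probabilities
    (pbar : (s : S) → A s → S → ℝ)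
    (hpbar0 : ∀ s a s', 0 ≤ pbar s a s') (hpbar1 : ∀ s a, ∑ s', pbar s a s' = 1)
    (α : ℝ) (hα0 : 0 < α) (hα1 : α < 1)
    -- initial distribution, positive everywhere (Assumption 3.2)
    (γ : S → ℝ) (hγpos : ∀ s, 0 < γ s) (hγ1 : ∑ s, γ s = 1)
    -- cost vector
    (cf : S → ℝ)
    -- uncertainty-set data
    (ℓp ℓsc : S → ℕ)
    (B : (s : S) → Matrix (Fin (ℓp s)) (A s × S) ℝ) (b : (s : S) → Fin (ℓp s) → ℝ)
    (M : (s : S) → Matrix (A s × S) (Fin (ℓsc s)) ℝ) (m : (s : S) → Fin (ℓsc s) → ℝ)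
    (x : (s : S) → A s × S → ℝ) (y : S → ℝ)
    -- the polyhedral constraints enforce the probability-simplex conditions
    (hB : ∀ s, ∀ v : A s × S → ℝ, (∀ i, (B s).mulVec v i ≤ b s i) →
        (∀ a, ∑ s', v (a, s') = 0) ∧ ∀ a s', 0 ≤ pbar s a s' + v (a, s')) :
    {r : ℝ | ∃ u : (s : S) → A s → S → ℝ,
        (∀ s, ∀ i, (B s).mulVec (fun p : A s × S => u s p.1 p.2) i ≤ b s i) ∧
        (∀ s, euclNorm ((M s)ᵀ.mulVec (fun p : A s × S => u s p.1 p.2) + m s)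
            ≤ x s ⬝ᵥ (fun p : A s × S => u s p.1 p.2) + y s) ∧
        r = (1 - α) * (γ ⬝ᵥ (((1 : Matrix S S ℝ)
              - α • Matrix.of fun s s' => ∑ a, f s a * (pbar s a s' + u s a s'))⁻¹).mulVec cf)}
      =
    {r : ℝ | ∃ (w : S → ℝ) (z : (s : S) → A s × S → ℝ),
        (∀ s, ∀ i, (B s).mulVec (z s) i ≤ w s * b s i) ∧
        (∀ s, euclNorm ((M s)ᵀ.mulVec (z s) + w s • m s) ≤ x s ⬝ᵥ z s + y s * w s) ∧
        (∀ s, (1 - α) * γ s ≤ w s) ∧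
        (∀ s' : S,
            (∑ s, w s * ((if s = s' then (1 : ℝ) else 0) - α * ∑ a, f s a * pbar s a s'))
              - α * ∑ s, ∑ a, f s a * z s (a, s') = (1 - α) * γ s') ∧
        r = ∑ s, w s * cf s} := by
  -- facts about the transition matrix of an admissible deviation
  have key : ∀ u : (s : S) → A s → S → ℝ,
      (∀ s a, ∑ s', u s a s' = 0) → (∀ s a s', 0 ≤ pbar s a s' + u s a s') →
      ((1 : Matrix S S ℝ)
          - α • Matrix.of fun s s' => ∑ a, f s a * (pbar s a s' + u s a s')).det ≠ 0 ∧
      (∀ i j, 0 ≤ (((1 : Matrix S S ℝ)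
          - α • Matrix.of fun s s' => ∑ a, f s a * (pbar s a s' + u s a s'))⁻¹) i j) ∧
      (∀ i, 1 ≤ (((1 : Matrix S S ℝ)
          - α • Matrix.of fun s s' => ∑ a, f s a * (pbar s a s' + u s a s'))⁻¹) i i) := by
    intro u hu1 hu2
    apply aux_inv hα0.le hα1
    · intro i j
      simp only [Matrix.smul_apply, Matrix.of_apply, smul_eq_mul]
      exact mul_nonneg hα0.le
        (Finset.sum_nonneg fun a _ => mul_nonneg (hf0 i a) (hu2 i a j))
    · intro i
      have h1 : ∀ a, ∑ j, f i a * (pbar i a j + u i a j) = f i a := by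
        intro a
        rw [← Finset.mul_sum, Finset.sum_add_distrib, hpbar1, hu1]
        ring
      calc ∑ j, (α • Matrix.of fun s s' =>
              ∑ a, f s a * (pbar s a s' + u s a s')) i j
          = α * ∑ j, ∑ a, f i a * (pbar i a j + u i a j) := by
            simp only [Matrix.smul_apply, Matrix.of_apply, smul_eq_mul]
            rw [Finset.mul_sum]
        _ = α * ∑ a, ∑ j, f i a * (pbar i a j + u i a j) := by rw [Finset.sum_comm]
        _ = α := by
            simp only [h1]
            rw [hf1 i, mul_one]
  -- the balance identity, pure algebra
  have expand : ∀ (u : (s : S) → A s → S → ℝ) (w : S → ℝ) (s' : S),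
      ∑ s, w s * (((1 : Matrix S S ℝ)
          - α • Matrix.of fun s t => ∑ a, f s a * (pbar s a t + u s a t)) s s') =
      (∑ s, w s * ((if s = s' then (1:ℝ) else 0) - α * ∑ a, f s a * pbar s a s'))
        - α * ∑ s, ∑ a, f s a * (w s * u s a s') := by
    intro u w s'
    rw [Finset.mul_sum, ← Finset.sum_sub_distrib]
    apply Finset.sum_congr rfl
    intro s _
    simp only [Matrix.sub_apply, Matrix.smul_apply, Matrix.of_apply, Matrix.one_apply,
      smul_eq_mul]
    have e1 : ∑ a, f s a * (pbar s a s' + u s a s')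
        = ∑ a, f s a * pbar s a s' + ∑ a, f s a * u s a s' := by
      rw [← Finset.sum_add_distrib]; exact Finset.sum_congr rfl fun a _ => by ring
    have e2 : ∑ a, f s a * (w s * u s a s') = w s * ∑ a, f s a * u s a s' := by
      rw [Finset.mul_sum]; exact Finset.sum_congr rfl fun a _ => by ring
    rw [e1, e2]; ring
  ext r
  simp only [Set.mem_setOf_eq]
  constructor
  · -- forward direction
    rintro ⟨u, hBu, hNu, hr⟩
    obtain ⟨hu1, hu2⟩ : (∀ s a, ∑ s', u s a s' = 0) ∧ ∀ s a s', 0 ≤ pbar s a s' + u s a s' := by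
      constructor
      · intro s a; exact (hB s _ (hBu s)).1 a
      · intro s a s'; exact (hB s _ (hBu s)).2 a s'
    obtain ⟨hdet, hQ0, hQd⟩ := key u hu1 hu2
    set T : Matrix S S ℝ := (1 : Matrix S S ℝ)
        - α • Matrix.of fun s s' => ∑ a, f s a * (pbar s a s' + u s a s') with hT
    set Q : Matrix S S ℝ := T⁻¹ with hQ
    set w : S → ℝ := fun s => (1 - α) * (γ ᵥ* Q) s with hw
    have hγQ : ∀ s, (γ ᵥ* Q) s = ∑ t, γ t * Q t s := fun s => rfl
    have hw0 : ∀ s, (1 - α) * γ s ≤ w s := by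
      intro s
      have h1 : γ s * 1 ≤ γ s * Q s s := mul_le_mul_of_nonneg_left (hQd s) (hγpos s).le
      have h2 : γ s * Q s s ≤ ∑ t, γ t * Q t s := by
        apply Finset.single_le_sum (f := fun t => γ t * Q t s)
          (fun t _ => mul_nonneg (hγpos t).le (hQ0 t s)) (Finset.mem_univ s)
      have h3 : γ s ≤ (γ ᵥ* Q) s := by rw [hγQ]; linarith
      have : (0:ℝ) ≤ 1 - α := by linarith
      simp only [hw]
      nlinarith
    have hwnn : ∀ s, 0 ≤ w s := fun s =>
      le_trans (by nlinarith [hγpos s]) (hw0 s)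
    have hTQ : Q * T = 1 := Matrix.nonsing_inv_mul _ (isUnit_iff_ne_zero.2 hdet)
    have hvm : (γ ᵥ* Q) ᵥ* T = γ := by
      rw [Matrix.vecMul_vecMul, hTQ, Matrix.vecMul_one]
    have hwkey : ∀ s', ∑ s, w s * (T s s') = (1 - α) * γ s' := by
      intro s'
      have h1 : ((γ ᵥ* Q) ᵥ* T) s' = ∑ s, (γ ᵥ* Q) s * T s s' := rfl
      calc ∑ s, w s * (T s s') = (1 - α) * ∑ s, (γ ᵥ* Q) s * T s s' := by
            rw [Finset.mul_sum]
            exact Finset.sum_congr rfl fun s _ => by simp only [hw]; ring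
        _ = (1 - α) * γ s' := by rw [← h1, hvm]
    refine ⟨w, fun s => w s • (fun p : A s × S => u s p.1 p.2), ?_, ?_, hw0, ?_, ?_⟩
    · intro s i
      rw [Matrix.mulVec_smul]
      exact le_trans (le_of_eq rfl)
        (by simpa [smul_eq_mul] using
          mul_le_mul_of_nonneg_left (hBu s i) (hwnn s))
    · intro s
      have e : (M s)ᵀ.mulVec (w s • (fun p : A s × S => u s p.1 p.2)) + w s • m s
          = w s • ((M s)ᵀ.mulVec (fun p : A s × S => u s p.1 p.2) + m s) := by
        rw [Matrix.mulVec_smul, smul_add]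
      rw [e, euclNorm_smul, abs_of_nonneg (hwnn s)]
      have hx : x s ⬝ᵥ (w s • fun p : A s × S => u s p.1 p.2) = w s * (x s ⬝ᵥ fun p : A s × S => u s p.1 p.2) := by
        rw [dotProduct_smul]; rfl
      rw [hx]
      nlinarith [hNu s, hwnn s, mul_le_mul_of_nonneg_left (hNu s) (hwnn s)]
    · intro s'
      have hz : ∀ s a t, (w s • (fun p : A s × S => u s p.1 p.2)) (a, t) = w s * u s a t := by
        intro s a t; rfl
      have := hwkey s'
      rw [expand u w s'] at this
      calc (∑ s, w s * ((if s = s' then (1:ℝ) else 0) - α * ∑ a, f s a * pbar s a s'))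
            - α * ∑ s, ∑ a, f s a * (w s • (fun p : A s × S => u s p.1 p.2)) (a, s')
          = (∑ s, w s * ((if s = s' then (1:ℝ) else 0) - α * ∑ a, f s a * pbar s a s'))
            - α * ∑ s, ∑ a, f s a * (w s * u s a s') := by
            simp only [hz]
        _ = (1 - α) * γ s' := this
    · rw [hr, Matrix.dotProduct_mulVec]
      have : (γ ᵥ* Q) ⬝ᵥ cf = ∑ s, (γ ᵥ* Q) s * cf s := rfl
      rw [this, Finset.mul_sum]
      exact Finset.sum_congr rfl fun s _ => by simp only [hw]; ring
  · -- reverse direction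
    rintro ⟨w, z, hBz, hNz, hwge, hbal, hr⟩
    have hwpos : ∀ s, 0 < w s := fun s =>
      lt_of_lt_of_le (by nlinarith [hγpos s]) (hwge s)
    set u : (s : S) → A s → S → ℝ := fun s a s' => (w s)⁻¹ * z s (a, s') with hu
    have hfun : ∀ s, (fun p : A s × S => u s p.1 p.2) = (w s)⁻¹ • z s := by
      intro s; funext p
      simp [hu, Pi.smul_apply, smul_eq_mul]
    have hBu : ∀ s, ∀ i, (B s).mulVec ((w s)⁻¹ • z s) i ≤ b s i := by
      intro s i
      rw [Matrix.mulVec_smul]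
      have h2 : (w s)⁻¹ * (w s * b s i) = b s i := by
        rw [← mul_assoc, inv_mul_cancel₀ (hwpos s).ne', one_mul]
      calc ((w s)⁻¹ • (B s).mulVec (z s)) i = (w s)⁻¹ * (B s).mulVec (z s) i := rfl
        _ ≤ (w s)⁻¹ * (w s * b s i) :=
            mul_le_mul_of_nonneg_left (hBz s i) (inv_nonneg.2 (hwpos s).le)
        _ = b s i := h2
    have hu1 : ∀ s a, ∑ s', u s a s' = 0 := by
      intro s a
      have := (hB s _ (hBu s)).1 a
      simpa [Pi.smul_apply, smul_eq_mul, hu] using this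
    have hu2 : ∀ s a s', 0 ≤ pbar s a s' + u s a s' := by
      intro s a s'
      have := (hB s _ (hBu s)).2 a s'
      simpa [Pi.smul_apply, smul_eq_mul, hu] using this
    have hz : ∀ s a t, w s * u s a t = z s (a, t) := by
      intro s a t
      simp only [hu]
      rw [← mul_assoc, mul_inv_cancel₀ (hwpos s).ne', one_mul]
    refine ⟨u, ?_, ?_, ?_⟩
    · intro s i
      rw [hfun s]
      exact hBu s i
    · intro s
      rw [hfun s]
      have e : (M s)ᵀ.mulVec ((w s)⁻¹ • z s) + m s
          = (w s)⁻¹ • ((M s)ᵀ.mulVec (z s) + w s • m s) := by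
        rw [Matrix.mulVec_smul, smul_add, smul_smul, inv_mul_cancel₀ (hwpos s).ne', one_smul]
      rw [e, euclNorm_smul, abs_of_nonneg (inv_nonneg.2 (hwpos s).le)]
      have hx : x s ⬝ᵥ ((w s)⁻¹ • z s) = (w s)⁻¹ * (x s ⬝ᵥ z s) := by
        rw [dotProduct_smul]; rfl
      rw [hx]
      have h := mul_le_mul_of_nonneg_left (hNz s) (inv_nonneg.2 (hwpos s).le)
      have h2 : (w s)⁻¹ * (y s * w s) = y s := by
        rw [mul_comm (y s), ← mul_assoc, inv_mul_cancel₀ (hwpos s).ne', one_mul]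
      have h3 : (w s)⁻¹ * (x s ⬝ᵥ z s + y s * w s)
          = (w s)⁻¹ * (x s ⬝ᵥ z s) + y s := by rw [mul_add, h2]
      linarith
    · obtain ⟨hdet, hQ0, hQd⟩ := key u hu1 hu2
      set T : Matrix S S ℝ := (1 : Matrix S S ℝ)
          - α • Matrix.of fun s s' => ∑ a, f s a * (pbar s a s' + u s a s') with hT
      set Q : Matrix S S ℝ := T⁻¹ with hQ
      have hwkey : ∀ s', ∑ s, w s * (T s s') = (1 - α) * γ s' := by
        intro s'
        have e := expand u w s'
        rw [← hT] at e
        rw [e]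
        have e2 : ∑ s, ∑ a, f s a * (w s * u s a s') = ∑ s, ∑ a, f s a * z s (a, s') := by
          apply Finset.sum_congr rfl; intro s _
          apply Finset.sum_congr rfl; intro a _
          rw [hz]
        rw [e2]
        exact hbal s'
      have hvm : w ᵥ* T = fun s' => (1 - α) * γ s' := funext fun s' => hwkey s'
      have hQmul : T * Q = 1 := Matrix.mul_nonsing_inv _ (isUnit_iff_ne_zero.2 hdet)
      have hw_eq : w = (fun t => (1 - α) * γ t) ᵥ* Q := by
        calc w = w ᵥ* (1 : Matrix S S ℝ) := (Matrix.vecMul_one w).symm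
          _ = w ᵥ* (T * Q) := by rw [hQmul]
          _ = (w ᵥ* T) ᵥ* Q := (Matrix.vecMul_vecMul w T Q).symm
          _ = (fun t => (1 - α) * γ t) ᵥ* Q := by rw [hvm]
      rw [hr, Matrix.dotProduct_mulVec]
      have hd : (γ ᵥ* Q) ⬝ᵥ cf = ∑ s, (γ ᵥ* Q) s * cf s := rfl
      rw [hd, Finset.mul_sum]
      apply Finset.sum_congr rfl
      intro s _
      have hws : w s = ∑ t, (1 - α) * γ t * Q t s := congrFun hw_eq s
      have hgs : (γ ᵥ* Q) s = ∑ t, γ t * Q t s := rfl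
      rw [hws, hgs, Finset.sum_mul, Finset.sum_mul, Finset.mul_sum]
      exact Finset.sum_congr rfl fun t _ => by ring
end

section
/- With the CMDP data, uncertainty-set data, feasible set Q, and dual data below, assume γ s ≥ 0 for every s. Then for every (w, z) ∈ Q and every dual-feasible tuple (β, μ, θ, η, ς), one has ∑_s w s * c_f s ≤ (1-α) * ∑_s γ s * (ς s - η s). -/
open Matrix BigOperators

lemma abs_dot_le_euclNorm {n : Type*} [Fintype n] (u v : n → ℝ) :
    |∑ i, u i * v i| ≤ euclNorm u * euclNorm v := by
  have h := abs_real_inner_le_norm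
    ((EuclideanSpace.equiv n ℝ).symm u) ((EuclideanSpace.equiv n ℝ).symm v)
  simpa [euclNorm, EuclideanSpace.norm_eq, PiLp.inner_apply, RCLike.inner_apply,
    Real.norm_eq_abs, sq_abs, mul_comm] using h

lemma euclNorm_nonneg {n : Type*} [Fintype n] (v : n → ℝ) : 0 ≤ euclNorm v :=
  Real.sqrt_nonneg _

theorem stmt_13 {S : Type*} [Fintype S] [Nonempty S] [DecidableEq S]
    {A : S → Type*} [∀ s, Fintype (A s)] [∀ s, Nonempty (A s)]
    -- stationary policy
    (f : (s : S) → A s → ℝ) (hf0 : ∀ s a, 0 ≤ f s a) (hf1 : ∀ s, ∑ a, f s a = 1)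
    -- observed transition probabilities
    (pbar : (s : S) → A s → S → ℝ)
    (hpbar0 : ∀ s a s', 0 ≤ pbar s a s') (hpbar1 : ∀ s a, ∑ s', pbar s a s' = 1)
    (α : ℝ) (hα0 : 0 < α) (hα1 : α < 1)
    (γ : S → ℝ) (hγ0 : ∀ s, 0 ≤ γ s)
    -- cost vector
    (cf : S → ℝ)
    -- uncertainty-set data
    (ℓp ℓsc : S → ℕ)
    (B : (s : S) → Matrix (Fin (ℓp s)) (A s × S) ℝ) (b : (s : S) → Fin (ℓp s) → ℝ)
    (M : (s : S) → Matrix (A s × S) (Fin (ℓsc s)) ℝ) (m : (s : S) → Fin (ℓsc s) → ℝ)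
    (x : (s : S) → A s × S → ℝ) (y : S → ℝ)
    -- observed transition matrix under f
    (Pbarf : Matrix S S ℝ)
    (hPbarf : ∀ s s', Pbarf s s' = ∑ a, f s a * pbar s a s')
    -- a pair (w, z) in the inner-problem feasible set Q
    (w : S → ℝ) (z : (s : S) → A s × S → ℝ)
    (hQ1 : ∀ s, ∀ i, (B s).mulVec (z s) i ≤ w s * b s i)
    (hQ2 : ∀ s, euclNorm ((M s)ᵀ.mulVec (z s) + w s • m s) ≤ x s ⬝ᵥ z s + y s * w s)
    (hQ3 : ∀ s, (1 - α) * γ s ≤ w s)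
    (hQ4 : ∀ s' : S,
        (∑ s, w s * ((if s = s' then (1 : ℝ) else 0) - α * Pbarf s s'))
          - α * ∑ s, ∑ a, f s a * z s (a, s') = (1 - α) * γ s')
    -- a dual-feasible tuple (β, μ, θ, η, ς)
    (β : (s : S) → Fin (ℓp s) → ℝ) (μ : (s : S) → Fin (ℓsc s) → ℝ)
    (θ : S → ℝ) (η ς : S → ℝ)
    (hd1 : ∀ s, cf s + b s ⬝ᵥ β s + m s ⬝ᵥ μ s + θ s * y s + η s
        - (ς s - α * ∑ s', Pbarf s s' * ς s') = 0)
    (hd2 : ∀ s, ∀ p : A s × S, ((B s)ᵀ.mulVec (β s)) p - ((M s).mulVec (μ s)) p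
        - θ s * x s p - α * f s p.1 * ς p.2 = 0)
    (hd3 : ∀ s, euclNorm (μ s) ≤ θ s)
    (hd4 : ∀ s, ∀ i, 0 ≤ β s i)
    (hd5 : ∀ s, 0 ≤ η s) :
    ∑ s, w s * cf s ≤ (1 - α) * ∑ s, γ s * (ς s - η s) := by
  -- per-state key inequality
  have key : ∀ s, α * ∑ p : A s × S, f s p.1 * ς p.2 * z s p
      ≤ w s * (b s ⬝ᵥ β s) + w s * (m s ⬝ᵥ μ s) + θ s * y s * w s := by
    intro s
    have h1 : α * ∑ p : A s × S, f s p.1 * ς p.2 * z s p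
        = ∑ p : A s × S, (((B s)ᵀ.mulVec (β s)) p - ((M s).mulVec (μ s)) p
            - θ s * x s p) * z s p := by
      rw [Finset.mul_sum]
      refine Finset.sum_congr rfl fun p _ => ?_
      linear_combination (-(z s p)) * hd2 s p
    have h2 : ∑ p : A s × S, ((B s)ᵀ.mulVec (β s)) p * z s p
        = β s ⬝ᵥ ((B s).mulVec (z s)) := by
      simp only [Matrix.mulVec, Matrix.transpose_apply, dotProduct, Finset.sum_mul,
        Finset.mul_sum]
      rw [Finset.sum_comm]
      exact Finset.sum_congr rfl fun i _ => Finset.sum_congr rfl fun p _ => by ring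
    have h3 : ∑ p : A s × S, ((M s).mulVec (μ s)) p * z s p
        = ∑ j, μ s j * ((M s)ᵀ.mulVec (z s)) j := by
      simp only [Matrix.mulVec, Matrix.transpose_apply, dotProduct, Finset.sum_mul,
        Finset.mul_sum]
      rw [Finset.sum_comm]
      exact Finset.sum_congr rfl fun j _ => Finset.sum_congr rfl fun p _ => by ring
    have hBz : β s ⬝ᵥ ((B s).mulVec (z s)) ≤ w s * (b s ⬝ᵥ β s) := by
      rw [dotProduct, dotProduct, Finset.mul_sum]
      refine Finset.sum_le_sum fun i _ => ?_
      calc β s i * (B s).mulVec (z s) i ≤ β s i * (w s * b s i) :=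
            mul_le_mul_of_nonneg_left (hQ1 s i) (hd4 s i)
        _ = w s * (b s i * β s i) := by ring
    have hθ : 0 ≤ θ s := le_trans (euclNorm_nonneg _) (hd3 s)
    have habs := abs_dot_le_euclNorm (μ s) ((M s)ᵀ.mulVec (z s) + w s • m s)
    have hmm := mul_le_mul (hd3 s) (hQ2 s) (euclNorm_nonneg _) hθ
    have hneg := neg_le_abs (∑ j, μ s j * ((M s)ᵀ.mulVec (z s) + w s • m s) j)
    have hsplit : ∑ j, μ s j * ((M s)ᵀ.mulVec (z s) + w s • m s) j
        = (∑ j, μ s j * ((M s)ᵀ.mulVec (z s)) j) + w s * (m s ⬝ᵥ μ s) := by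
      simp only [Pi.add_apply, Pi.smul_apply, smul_eq_mul, mul_add, Finset.sum_add_distrib,
        dotProduct, Finset.mul_sum]
      congr 1
      exact Finset.sum_congr rfl fun j _ => by ring
    have hmul : θ s * (x s ⬝ᵥ z s + y s * w s)
        = θ s * (x s ⬝ᵥ z s) + θ s * y s * w s := by ring
    have hexp : ∑ p : A s × S, (((B s)ᵀ.mulVec (β s)) p - ((M s).mulVec (μ s)) p
            - θ s * x s p) * z s p
        = β s ⬝ᵥ ((B s).mulVec (z s)) - (∑ j, μ s j * ((M s)ᵀ.mulVec (z s)) j)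
          - θ s * (x s ⬝ᵥ z s) := by
      rw [← h2, ← h3]
      simp only [sub_mul, Finset.sum_sub_distrib, dotProduct, Finset.mul_sum]
      congr 1
      exact Finset.sum_congr rfl fun p _ => by ring
    rw [h1, hexp]
    linarith [habs, hmm, hneg, hsplit, hBz, hmul]
  -- rewrite the cost
  have hcf : ∀ s, cf s = ς s - α * ∑ s', Pbarf s s' * ς s'
      - (b s ⬝ᵥ β s) - (m s ⬝ᵥ μ s) - θ s * y s - η s := fun s => by
    linarith [hd1 s]
  -- structural equality from hQ4
  have E2 : ∑ s, w s * ς s - α * ∑ s, ∑ s', w s * (Pbarf s s' * ς s')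
      = (1 - α) * ∑ s, γ s * ς s
        + α * ∑ s, ∑ p : A s × S, f s p.1 * ς p.2 * z s p := by
    have h4 : ∑ s', (((∑ s, w s * ((if s = s' then (1 : ℝ) else 0) - α * Pbarf s s'))
          - α * ∑ s, ∑ a, f s a * z s (a, s')) * ς s')
        = ∑ s', ((1 - α) * γ s') * ς s' :=
      Finset.sum_congr rfl fun s' _ => by rw [hQ4 s']
    have e1 : ∑ s', (∑ s, w s * ((if s = s' then (1 : ℝ) else 0) - α * Pbarf s s')) * ς s'
        = ∑ s, w s * ς s - α * ∑ s, ∑ s', w s * (Pbarf s s' * ς s') := by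
      simp only [Finset.sum_mul]
      rw [Finset.sum_comm, Finset.mul_sum, ← Finset.sum_sub_distrib]
      refine Finset.sum_congr rfl fun s _ => ?_
      have e : ∀ s', w s * ((if s = s' then (1 : ℝ) else 0) - α * Pbarf s s') * ς s'
          = (if s = s' then w s * ς s' else 0) - α * (w s * (Pbarf s s' * ς s')) := by
        intro s'; by_cases h : s = s' <;> simp [h] <;> ring
      simp only [e, Finset.sum_sub_distrib, Finset.sum_ite_eq, Finset.mem_univ, if_true,
        ← Finset.mul_sum]
    have e2 : ∑ s', (α * ∑ s, ∑ a, f s a * z s (a, s')) * ς s'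
        = α * ∑ s, ∑ p : A s × S, f s p.1 * ς p.2 * z s p := by
      have e : ∀ s', (α * ∑ s, ∑ a, f s a * z s (a, s')) * ς s'
          = ∑ s, ∑ a, α * (f s a * z s (a, s') * ς s') := by
        intro s'
        simp only [Finset.sum_mul, Finset.mul_sum]
        exact Finset.sum_congr rfl fun s _ => Finset.sum_congr rfl fun a _ => by ring
      simp only [e]
      rw [Finset.sum_comm, Finset.mul_sum]
      refine Finset.sum_congr rfl fun s _ => ?_
      rw [Fintype.sum_prod_type, Finset.mul_sum, Finset.sum_comm]
      refine Finset.sum_congr rfl fun a _ => ?_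
      rw [Finset.mul_sum]
      exact Finset.sum_congr rfl fun s' _ => by ring
    have hR : ∑ s', ((1 - α) * γ s') * ς s' = (1 - α) * ∑ s, γ s * ς s := by
      rw [Finset.mul_sum]; exact Finset.sum_congr rfl fun s _ => by ring
    simp only [sub_mul, Finset.sum_sub_distrib, e1, e2, hR] at h4
    have hR2 : (∑ x, (1:ℝ) * γ x * ς x) - ∑ x, α * γ x * ς x
        = (1 - α) * ∑ s, γ s * ς s := by
      rw [Finset.mul_sum, ← Finset.sum_sub_distrib]
      exact Finset.sum_congr rfl fun s _ => by ring
    linarith [h4, hR2]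
  -- expand ∑ w cf termwise
  have term : ∀ s, w s * cf s
      = (w s * ς s - α * ∑ s', w s * (Pbarf s s' * ς s'))
        - (w s * (b s ⬝ᵥ β s) + w s * (m s ⬝ᵥ μ s) + θ s * y s * w s) - w s * η s := by
    intro s
    have hx : ∑ s', w s * (Pbarf s s' * ς s') = w s * ∑ s', Pbarf s s' * ς s' := by
      rw [Finset.mul_sum]
    rw [hcf s, hx]; ring
  have E1 : ∑ s, w s * cf s
      = (∑ s, w s * ς s - α * ∑ s, ∑ s', w s * (Pbarf s s' * ς s'))
        - ∑ s, (w s * (b s ⬝ᵥ β s) + w s * (m s ⬝ᵥ μ s) + θ s * y s * w s)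
        - ∑ s, w s * η s := by
    simp only [term, Finset.sum_sub_distrib, ← Finset.mul_sum]
  -- sum the key inequalities
  have keysum : α * ∑ s, ∑ p : A s × S, f s p.1 * ς p.2 * z s p
      ≤ ∑ s, (w s * (b s ⬝ᵥ β s) + w s * (m s ⬝ᵥ μ s) + θ s * y s * w s) := by
    rw [Finset.mul_sum]
    exact Finset.sum_le_sum fun s _ => key s
  -- lower bound on ∑ w η
  have hwη : (1 - α) * ∑ s, γ s * η s ≤ ∑ s, w s * η s := by
    rw [Finset.mul_sum]
    refine Finset.sum_le_sum fun s _ => ?_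
    have := mul_le_mul_of_nonneg_right (hQ3 s) (hd5 s)
    linarith [this]
  have hRHS : (1 - α) * ∑ s, γ s * (ς s - η s)
      = (1 - α) * ∑ s, γ s * ς s - (1 - α) * ∑ s, γ s * η s := by
    simp only [mul_sub, Finset.sum_sub_distrib]
  linarith [E1, E2, keysum, hwη, hRHS]
end

section
/- With the CMDP data, uncertainty-set data, and dual data below, assume γ s > 0 for every s, let u be an admissible deviation, and let (β, μ, θ, η, ς) be a dual-feasible tuple. Then the matrix 1 - α • P_f(u) is invertible and (1-α) * (γ ⬝ᵥ ((1 - α • P_f(u))⁻¹).mulVec c_f) ≤ (1-α) * ∑_s γ s * (ς s - η s). -/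
open Matrix BigOperators

lemma dot_le_euclNorm {n : Type*} [Fintype n] (v w : n → ℝ) :
    ∑ i, v i * w i ≤ euclNorm v * euclNorm w := by
  have h2 := Finset.sum_mul_sq_le_sq_mul_sq Finset.univ v w
  calc ∑ i, v i * w i ≤ |∑ i, v i * w i| := le_abs_self _
    _ = Real.sqrt ((∑ i, v i * w i) ^ 2) := (Real.sqrt_sq_eq_abs _).symm
    _ ≤ Real.sqrt ((∑ i, v i ^ 2) * ∑ i, w i ^ 2) := Real.sqrt_le_sqrt h2
    _ = euclNorm v * euclNorm w := by
        rw [euclNorm, euclNorm, Real.sqrt_mul (by positivity)]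

theorem stmt_14 {S : Type*} [Fintype S] [Nonempty S] [DecidableEq S]
    {A : S → Type*} [∀ s, Fintype (A s)] [∀ s, Nonempty (A s)]
    -- stationary policy
    (f : (s : S) → A s → ℝ) (hf0 : ∀ s a, 0 ≤ f s a) (hf1 : ∀ s, ∑ a, f s a = 1)
    -- observed transition probabilities
    (pbar : (s : S) → A s → S → ℝ)
    (hpbar0 : ∀ s a s', 0 ≤ pbar s a s') (hpbar1 : ∀ s a, ∑ s', pbar s a s' = 1)
    (α : ℝ) (hα0 : 0 < α) (hα1 : α < 1)
    -- initial distribution, positive everywhere (Assumption 3.2)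
    (γ : S → ℝ) (hγpos : ∀ s, 0 < γ s) (hγ1 : ∑ s, γ s = 1)
    -- cost vector
    (cf : S → ℝ)
    -- uncertainty-set data
    (ℓp ℓsc : S → ℕ)
    (B : (s : S) → Matrix (Fin (ℓp s)) (A s × S) ℝ) (b : (s : S) → Fin (ℓp s) → ℝ)
    (M : (s : S) → Matrix (A s × S) (Fin (ℓsc s)) ℝ) (m : (s : S) → Fin (ℓsc s) → ℝ)
    (x : (s : S) → A s × S → ℝ) (y : S → ℝ)
    -- an admissible deviation
    (u : (s : S) → A s → S → ℝ)
    (hu1 : ∀ s, ∀ i, (B s).mulVec (fun p : A s × S => u s p.1 p.2) i ≤ b s i)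
    (hu2 : ∀ s, euclNorm ((M s)ᵀ.mulVec (fun p : A s × S => u s p.1 p.2) + m s)
             ≤ x s ⬝ᵥ (fun p : A s × S => u s p.1 p.2) + y s)
    (hu3 : ∀ s a s', 0 ≤ pbar s a s' + u s a s')
    (hu4 : ∀ s a, ∑ s', u s a s' = 0)
    -- perturbed and observed transition matrices under f
    (Pfu : Matrix S S ℝ)
    (hPfu : ∀ s s', Pfu s s' = ∑ a, f s a * (pbar s a s' + u s a s'))
    (Pbarf : Matrix S S ℝ)
    (hPbarf : ∀ s s', Pbarf s s' = ∑ a, f s a * pbar s a s')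
    -- a dual-feasible tuple (β, μ, θ, η, ς)
    (β : (s : S) → Fin (ℓp s) → ℝ) (μ : (s : S) → Fin (ℓsc s) → ℝ)
    (θ : S → ℝ) (η ς : S → ℝ)
    (hd1 : ∀ s, cf s + b s ⬝ᵥ β s + m s ⬝ᵥ μ s + θ s * y s + η s
        - (ς s - α * ∑ s', Pbarf s s' * ς s') = 0)
    (hd2 : ∀ s, ∀ p : A s × S, ((B s)ᵀ.mulVec (β s)) p - ((M s).mulVec (μ s)) p
        - θ s * x s p - α * f s p.1 * ς p.2 = 0)
    (hd3 : ∀ s, euclNorm (μ s) ≤ θ s)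
    (hd4 : ∀ s, ∀ i, 0 ≤ β s i)
    (hd5 : ∀ s, 0 ≤ η s) :
    IsUnit (1 - α • Pfu) ∧
      (1 - α) * (γ ⬝ᵥ ((1 - α • Pfu)⁻¹).mulVec cf)
        ≤ (1 - α) * ∑ s, γ s * (ς s - η s) := by
  classical
  -- basic properties of Pfu
  have hPnn : ∀ s s', 0 ≤ Pfu s s' := by
    intro s s'
    rw [hPfu]
    exact Finset.sum_nonneg fun a _ => mul_nonneg (hf0 s a) (hu3 s a s')
  have hProw : ∀ s, ∑ s', Pfu s s' = 1 := by
    intro s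
    simp_rw [hPfu]
    rw [Finset.sum_comm]
    have : ∀ a : A s, ∑ s', f s a * (pbar s a s' + u s a s') = f s a := by
      intro a
      rw [← Finset.mul_sum, Finset.sum_add_distrib, hpbar1, hu4, add_zero, mul_one]
    simp_rw [this]
    exact hf1 s
  -- expansion of (1 - α • Pfu).mulVec
  have hexp : ∀ (z : S → ℝ) s, (1 - α • Pfu).mulVec z s
      = z s - α * ∑ s', Pfu s s' * z s' := by
    intro z s
    simp only [Matrix.mulVec, dotProduct, Matrix.sub_apply, Matrix.smul_apply,
      Matrix.one_apply, smul_eq_mul, sub_mul, ite_mul, one_mul, zero_mul,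
      Finset.sum_sub_distrib, Finset.sum_ite_eq, Finset.mem_univ, if_true, Finset.mul_sum,
      mul_assoc]
  -- monotonicity
  have hmono : ∀ d : S → ℝ, (∀ s, 0 ≤ d s - α * ∑ s', Pfu s s' * d s') → ∀ s, 0 ≤ d s := by
    intro d hd s
    obtain ⟨i, _, hi⟩ := Finset.exists_min_image Finset.univ d Finset.univ_nonempty
    have h1 := hd i
    have h2 : d i ≤ ∑ s', Pfu i s' * d s' := by
      calc d i = ∑ s', Pfu i s' * d i := by rw [← Finset.sum_mul, hProw, one_mul]
        _ ≤ ∑ s', Pfu i s' * d s' :=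
          Finset.sum_le_sum fun j _ => mul_le_mul_of_nonneg_left (hi j (Finset.mem_univ j))
            (hPnn i j)
    have hdi : 0 ≤ d i := by nlinarith
    exact le_trans hdi (hi s (Finset.mem_univ s))
  -- invertibility
  have hdet : IsUnit (1 - α • Pfu).det := by
    rw [isUnit_iff_ne_zero]
    intro h0
    obtain ⟨v, hvne, hv0⟩ := Matrix.exists_mulVec_eq_zero_iff.mpr h0
    have hz : ∀ s, v s - α * ∑ s', Pfu s s' * v s' = 0 := by
      intro s
      rw [← hexp v s, hv0]
      rfl
    have h1 : ∀ s, 0 ≤ v s := hmono v fun s => le_of_eq (hz s).symm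
    have h2 : ∀ s, 0 ≤ -v s := by
      apply hmono
      intro s
      have := hz s
      have hsum : ∑ s', Pfu s s' * -v s' = -∑ s', Pfu s s' * v s' := by
        simp [Finset.sum_neg_distrib, mul_neg]
      rw [hsum]
      linarith
    exact hvne (funext fun s => by
      have ha := h1 s; have hb := h2 s
      simp only [Pi.zero_apply]; linarith)
  have hunit : IsUnit (1 - α • Pfu) := (Matrix.isUnit_iff_isUnit_det _).mpr hdet
  refine ⟨hunit, ?_⟩
  -- key pointwise inequality
  have hkey : ∀ s, cf s + η s ≤ ς s - α * ∑ s', Pfu s s' * ς s' := by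
    intro s
    set U : A s × S → ℝ := fun p => u s p.1 p.2 with hU
    -- step A: the perturbation term
    have hA : α * (∑ s', Pfu s s' * ς s') - α * (∑ s', Pbarf s s' * ς s')
        = ∑ p : A s × S, (α * f s p.1 * ς p.2) * U p := by
      rw [← mul_sub, ← Finset.sum_sub_distrib]
      rw [Fintype.sum_prod_type]
      rw [Finset.mul_sum, Finset.sum_comm]
      apply Finset.sum_congr rfl
      intro s' _
      rw [hPfu, hPbarf, ← sub_mul, ← Finset.sum_sub_distrib]
      rw [Finset.sum_mul, Finset.mul_sum]
      apply Finset.sum_congr rfl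
      intro a _
      ring
    -- step B: rewrite via dual feasibility
    have hB : ∑ p : A s × S, (α * f s p.1 * ς p.2) * U p
        = β s ⬝ᵥ (B s).mulVec U - μ s ⬝ᵥ ((M s)ᵀ.mulVec U) - θ s * (x s ⬝ᵥ U) := by
      have h1 : ∀ p : A s × S, α * f s p.1 * ς p.2
          = ((B s)ᵀ.mulVec (β s)) p - ((M s).mulVec (μ s)) p - θ s * x s p := by
        intro p; have := hd2 s p; linarith
      have e1 : ∑ p : A s × S, ((B s)ᵀ.mulVec (β s)) p * U p = β s ⬝ᵥ (B s).mulVec U := by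
        calc ∑ p : A s × S, ((B s)ᵀ.mulVec (β s)) p * U p
            = ((B s)ᵀ.mulVec (β s)) ⬝ᵥ U := rfl
          _ = ((β s) ᵥ* (B s)) ⬝ᵥ U := by rw [Matrix.mulVec_transpose]
          _ = β s ⬝ᵥ (B s).mulVec U := (Matrix.dotProduct_mulVec _ _ _).symm
      have e2 : ∑ p : A s × S, ((M s).mulVec (μ s)) p * U p = μ s ⬝ᵥ ((M s)ᵀ.mulVec U) := by
        calc ∑ p : A s × S, ((M s).mulVec (μ s)) p * U p
            = ((M s).mulVec (μ s)) ⬝ᵥ U := rfl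
          _ = U ⬝ᵥ (M s).mulVec (μ s) := dotProduct_comm _ _
          _ = (U ᵥ* (M s)) ⬝ᵥ μ s := Matrix.dotProduct_mulVec _ _ _
          _ = μ s ⬝ᵥ (U ᵥ* (M s)) := dotProduct_comm _ _
          _ = μ s ⬝ᵥ ((M s)ᵀ.mulVec U) := by rw [Matrix.mulVec_transpose]
      have e3 : ∑ p : A s × S, (θ s * x s p) * U p = θ s * (x s ⬝ᵥ U) := by
        rw [dotProduct, Finset.mul_sum]
        exact Finset.sum_congr rfl fun p _ => by ring
      simp_rw [h1, sub_mul, Finset.sum_sub_distrib]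
      rw [e1, e2, e3]
    -- bounds
    have hb1 : β s ⬝ᵥ (B s).mulVec U ≤ b s ⬝ᵥ β s := by
      rw [dotProduct, dotProduct]
      apply Finset.sum_le_sum
      intro i _
      calc β s i * (B s).mulVec U i ≤ β s i * b s i :=
            mul_le_mul_of_nonneg_left (hu1 s i) (hd4 s i)
        _ = b s i * β s i := mul_comm _ _
    have hb2 : -(μ s ⬝ᵥ ((M s)ᵀ.mulVec U + m s))
        ≤ euclNorm (μ s) * euclNorm ((M s)ᵀ.mulVec U + m s) := by
      have h := dot_le_euclNorm (μ s) (-((M s)ᵀ.mulVec U + m s))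
      have hn : euclNorm (-((M s)ᵀ.mulVec U + m s)) = euclNorm ((M s)ᵀ.mulVec U + m s) := by
        unfold euclNorm
        congr 1
        exact Finset.sum_congr rfl fun i _ => by simp only [Pi.neg_apply]; ring
      rw [hn] at h
      refine le_trans (le_of_eq ?_) h
      rw [dotProduct, ← Finset.sum_neg_distrib]
      exact Finset.sum_congr rfl fun i _ => by simp only [Pi.neg_apply]; ring
    have hθ0 : 0 ≤ θ s := le_trans (euclNorm_nonneg (μ s)) (hd3 s)
    have hb3 : euclNorm (μ s) * euclNorm ((M s)ᵀ.mulVec U + m s) ≤ θ s * (x s ⬝ᵥ U + y s) :=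
      mul_le_mul (hd3 s) (hu2 s) (euclNorm_nonneg _) hθ0
    have hsplit : μ s ⬝ᵥ ((M s)ᵀ.mulVec U) = μ s ⬝ᵥ ((M s)ᵀ.mulVec U + m s) - m s ⬝ᵥ μ s := by
      rw [dotProduct_add, dotProduct_comm (μ s) (m s)]
      ring
    have hd1s := hd1 s
    have hBound : α * (∑ s', Pfu s s' * ς s') - α * (∑ s', Pbarf s s' * ς s')
        ≤ b s ⬝ᵥ β s + m s ⬝ᵥ μ s + θ s * y s := by
      rw [hA, hB, hsplit]
      nlinarith [hb1, hb2, hb3]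
    linarith
  -- final assembly
  set v : S → ℝ := ((1 - α • Pfu)⁻¹).mulVec cf with hv
  have hMv : (1 - α • Pfu).mulVec v = cf := by
    rw [hv, Matrix.mulVec_mulVec, Matrix.mul_nonsing_inv _ hdet, Matrix.one_mulVec]
  have hMvp : ∀ s, v s - α * ∑ s', Pfu s s' * v s' = cf s := by
    intro s
    rw [← hexp v s, hMv]
  have hle : ∀ s, v s ≤ ς s - η s := by
    have := hmono (fun s => ς s - η s - v s) ?_
    · intro s; linarith [this s]
    · intro s
      have h1 := hkey s
      have h2 := hMvp s
      have hsum : ∑ s', Pfu s s' * (ς s' - η s' - v s')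
          = (∑ s', Pfu s s' * ς s') - (∑ s', Pfu s s' * η s') - ∑ s', Pfu s s' * v s' := by
        simp_rw [mul_sub, Finset.sum_sub_distrib]
      have hηnn : 0 ≤ ∑ s', Pfu s s' * η s' :=
        Finset.sum_nonneg fun j _ => mul_nonneg (hPnn s j) (hd5 j)
      simp only [hsum]
      nlinarith
  apply mul_le_mul_of_nonneg_left _ (by linarith : (0:ℝ) ≤ 1 - α)
  rw [dotProduct]
  apply Finset.sum_le_sum
  intro s _
  exact mul_le_mul_of_nonneg_left (hle s) (le_of_lt (hγpos s))
end
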